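/- arXiv:math/0511748 — 5 statements merged into one kernel-verified Lean document; each statement's English description precedes it below -/
import Mathlib

section
/- Let κ be an infinite cardinal with cf(κ) > ℵ₀ and let (S_i)_{i<κ}, S*, (π_i)_{i<κ}, (ρ_{i,j})_{i≤j<κ} be a coherent restriction system as in the context, with |S_i| < κ for every i < κ and |S*| ≥ κ⁺. If p ∈ S_i has many extensions (i.e., |π_i⁻¹(p)| ≥ κ⁺), then for all sufficiently large j with i < j < κ (i.e., there exists j₀ < κ such that for all j with j₀ ≤ j < κ) there exist two distinct elements q₀, q₁ ∈ S_j with ρ_{i,j}(q₀) = ρ_{i,j}(q₁) = p such that both q₀ and q₁ have many extensions. -/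
/-!
A coherent restriction system (abstracting restriction maps on Galois types over an
increasing continuous chain of models of length κ with union M*): an infinite cardinal κ
with cf(κ) > ℵ₀, sets `S i` for `i < κ.ord`, a set `Sstar`, maps `π i : Sstar → S i` and
`ρ i j : S j → S i` for `i ≤ j < κ.ord`, with ρ compatible (identity, composition,
`ρ i j ∘ π j = π i`) and such that `p ↦ (π i p)_i` is injective.

STATEMENT: assume `|S i| < κ` for all `i < κ` and `|Sstar| ≥ κ⁺`.  If `p ∈ S i` has many
extensions (`|π i ⁻¹ p| ≥ κ⁺`), then for all sufficiently large `j` with `i < j < κ`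
(i.e. there is `j₀` with `i < j₀ < κ` such that for all `j` with `j₀ ≤ j < κ`) there are
two distinct `q₀ ≠ q₁ ∈ S j` restricting to `p`, each with many extensions.
-/

universe u

open Cardinal

theorem two_extensions_with_many_extensions
    (κ : Cardinal.{u}) (hκ : ℵ₀ ≤ κ) (hcf : ℵ₀ < κ.ord.cof)
    (S : Ordinal.{u} → Type u) (Sstar : Type u)
    (π : ∀ i, i < κ.ord → Sstar → S i)
    (ρ : ∀ i j, i ≤ j → j < κ.ord → S j → S i)
    (hρ_id : ∀ i (hi : i < κ.ord) (p : S i), ρ i i le_rfl hi p = p)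
    (hρ_comp : ∀ i j k (hij : i ≤ j) (hjk : j ≤ k) (hk : k < κ.ord) (p : S k),
      ρ i j hij (lt_of_le_of_lt hjk hk) (ρ j k hjk hk p) = ρ i k (hij.trans hjk) hk p)
    (hπρ : ∀ i j (hij : i ≤ j) (hj : j < κ.ord) (p : Sstar),
      ρ i j hij hj (π j hj p) = π i (lt_of_le_of_lt hij hj) p)
    (hinj : ∀ p q : Sstar, (∀ i (hi : i < κ.ord), π i hi p = π i hi q) → p = q)
    (hsmall : ∀ i (hi : i < κ.ord), #(S i) < κ)
    (hbig : Order.succ κ ≤ #Sstar)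
    (i : Ordinal.{u}) (hi : i < κ.ord) (p : S i)
    (hmany : Order.succ κ ≤ #{q : Sstar // π i hi q = p}) :
    ∃ j₀, ∃ hij₀ : i < j₀, j₀ < κ.ord ∧
      ∀ j (hj₀ : j₀ ≤ j) (hj : j < κ.ord),
        ∃ q₀ q₁ : S j, q₀ ≠ q₁ ∧
          ρ i j (le_of_lt (lt_of_lt_of_le hij₀ hj₀)) hj q₀ = p ∧
          ρ i j (le_of_lt (lt_of_lt_of_le hij₀ hj₀)) hj q₁ = p ∧
          Order.succ κ ≤ #{r : Sstar // π j hj r = q₀} ∧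
          Order.succ κ ≤ #{r : Sstar // π j hj r = q₁} := by
  classical
  -- splitting lemma: a point with many extensions at level j has an extension with
  -- many extensions at any higher level k
  have hsplit : ∀ j k (hjk : j ≤ k) (hk : k < κ.ord) (q : S j),
      Order.succ κ ≤ #{r : Sstar // π j (lt_of_le_of_lt hjk hk) r = q} →
      ∃ q' : S k, ρ j k hjk hk q' = q ∧ Order.succ κ ≤ #{r : Sstar // π k hk r = q'} := by
    intro j k hjk hk q hq
    by_contra hcon
    push_neg at hcon
    have hj : j < κ.ord := lt_of_le_of_lt hjk hk
    set T := Σ q' : {q' : S k // ρ j k hjk hk q' = q}, {r : Sstar // π k hk r = q'.1} with hT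
    have hF : Function.Injective (fun r : {r : Sstar // π j hj r = q} =>
        (⟨⟨π k hk r.1, by rw [hπρ j k hjk hk r.1]; exact r.2⟩, ⟨r.1, rfl⟩⟩ : T)) := by
      intro a b h
      exact Subtype.ext (congrArg (fun x : T => x.2.1) h)
    have h1 : Order.succ κ ≤ #T := le_trans hq (Cardinal.mk_le_of_injective hF)
    have h2 : #T ≤ κ := by
      rw [hT, Cardinal.mk_sigma]
      calc (Cardinal.sum fun q' : {q' : S k // ρ j k hjk hk q' = q} =>
              #{r : Sstar // π k hk r = q'.1})
          ≤ Cardinal.sum fun _ : {q' : S k // ρ j k hjk hk q' = q} => κ := by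
            apply Cardinal.sum_le_sum
            intro q'
            exact Order.lt_succ_iff.1 (hcon q'.1 q'.2)
        _ = #{q' : S k // ρ j k hjk hk q' = q} * κ := Cardinal.sum_const' _ _
        _ ≤ κ * κ := by
            exact mul_le_mul_left (le_trans (Cardinal.mk_subtype_le _) (hsmall k hk).le) κ
        _ = κ := Cardinal.mul_eq_self hκ
    exact (Order.lt_succ κ).not_ge (h1.trans h2)
  by_cases hex : ∃ j, ∃ hij : i < j, ∃ hj : j < κ.ord, ∃ q₀ q₁ : S j, q₀ ≠ q₁ ∧
      ρ i j hij.le hj q₀ = p ∧ ρ i j hij.le hj q₁ = p ∧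
      Order.succ κ ≤ #{r : Sstar // π j hj r = q₀} ∧
      Order.succ κ ≤ #{r : Sstar // π j hj r = q₁}
  · obtain ⟨j, hij, hj, q₀, q₁, hne, hq0, hq1, hm0, hm1⟩ := hex
    refine ⟨j, hij, hj, fun k hjk hk => ?_⟩
    obtain ⟨q₀', hq0', hm0'⟩ := hsplit j k hjk hk q₀ hm0
    obtain ⟨q₁', hq1', hm1'⟩ := hsplit j k hjk hk q₁ hm1
    refine ⟨q₀', q₁', ?_, ?_, ?_, hm0', hm1'⟩
    · intro h; exact hne (by rw [← hq0', ← hq1', h])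
    · rw [← hρ_comp i j k hij.le hjk hk q₀', hq0', hq0]
    · rw [← hρ_comp i j k hij.le hjk hk q₁', hq1', hq1]
  · exfalso
    push_neg at hex
    -- the "bad" predicate on the fiber over p
    set Fib := {r : Sstar // π i hi r = p} with hFib
    have hfib : ∀ r : Fib, π i hi r.1 = p := fun r => r.2
    set Bad : Fib → Prop := fun r =>
      ∃ j, ∃ hj : j < κ.ord, #{s : Sstar // π j hj s = π j hj r.1} ≤ κ with hBad
    -- at most one non-bad point
    have hgood : ∀ a b : Fib, ¬ Bad a → ¬ Bad b → a = b := by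
      intro a b ha hb
      simp only [hBad, not_exists, not_le] at ha hb
      apply Subtype.ext
      apply hinj
      intro j hj
      rcases le_or_gt j i with hji | hij
      · rw [← hπρ j i hji hi a.1, ← hπρ j i hji hi b.1, hfib a, hfib b]
      · have hma : Order.succ κ ≤ #{s : Sstar // π j hj s = π j hj a.1} :=
          Order.succ_le_iff.2 (ha j hj)
        have hmb : Order.succ κ ≤ #{s : Sstar // π j hj s = π j hj b.1} :=
          Order.succ_le_iff.2 (hb j hj)
        by_contra hne
        have hra : ρ i j hij.le hj (π j hj a.1) = p := by rw [hπρ i j hij.le hj a.1, hfib a]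
        have hrb : ρ i j hij.le hj (π j hj b.1) = p := by rw [hπρ i j hij.le hj b.1, hfib b]
        exact absurd hmb (not_le_of_gt
          (hex j hij hj (π j hj a.1) (π j hj b.1) hne hra hrb hma))
    have h1 : #{r : Fib // ¬ Bad r} ≤ 1 := by
      rw [Cardinal.le_one_iff_subsingleton]
      exact ⟨fun a b => Subtype.ext (hgood a.1 b.1 a.2 b.2)⟩
    -- counting the bad points
    set T : Type (u+1) := Σ jj : Set.Iio κ.ord,
        ULift.{u+1} (Σ q : {q : S jj.1 // #{s : Sstar // π jj.1 jj.2 s = q} ≤ κ},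
          {s : Sstar // π jj.1 jj.2 s = q.1}) with hT
    have hE : Function.Injective (fun r : {r : Fib // Bad r} =>
        (⟨⟨r.2.choose, r.2.choose_spec.choose⟩, ULift.up
          ⟨⟨π r.2.choose r.2.choose_spec.choose r.1.1, r.2.choose_spec.choose_spec⟩,
           ⟨r.1.1, rfl⟩⟩⟩ : T)) := by
      intro a b h
      exact Subtype.ext (Subtype.ext (congrArg (fun x : T => x.2.down.2.1) h))
    have h2 : Cardinal.lift.{u+1} #{r : Fib // Bad r} ≤ Cardinal.lift.{u} #T :=
      Cardinal.lift_mk_le'.2 ⟨⟨_, hE⟩⟩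
    have h3 : #T ≤ Cardinal.lift.{u+1} κ := by
      rw [hT, Cardinal.mk_sigma]
      calc (Cardinal.sum fun jj : Set.Iio κ.ord =>
              #(ULift.{u+1} (Σ q : {q : S jj.1 // #{s : Sstar // π jj.1 jj.2 s = q} ≤ κ},
                {s : Sstar // π jj.1 jj.2 s = q.1})))
          ≤ Cardinal.sum fun _ : Set.Iio κ.ord => Cardinal.lift.{u+1} κ := by
            apply Cardinal.sum_le_sum
            intro jj
            rw [Cardinal.mk_uLift, Cardinal.lift_le, Cardinal.mk_sigma]
            calc (Cardinal.sum fun q : {q : S jj.1 // #{s : Sstar // π jj.1 jj.2 s = q} ≤ κ} =>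
                    #{s : Sstar // π jj.1 jj.2 s = q.1})
                ≤ Cardinal.sum fun _ : {q : S jj.1 //
                    #{s : Sstar // π jj.1 jj.2 s = q} ≤ κ} => κ :=
                  Cardinal.sum_le_sum _ _ fun q => q.2
              _ = #{q : S jj.1 // #{s : Sstar // π jj.1 jj.2 s = q} ≤ κ} * κ :=
                  Cardinal.sum_const' _ _
              _ ≤ κ * κ := mul_le_mul_left
                  (le_trans (Cardinal.mk_subtype_le _) (hsmall jj.1 jj.2).le) κ
              _ = κ := Cardinal.mul_eq_self hκ
        _ = #(Set.Iio κ.ord) * Cardinal.lift.{u+1} κ := Cardinal.sum_const' _ _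
        _ = Cardinal.lift.{u+1} κ * Cardinal.lift.{u+1} κ := by
            rw [Ordinal.mk_Iio_ordinal, Cardinal.card_ord]
        _ = Cardinal.lift.{u+1} κ := by
            rw [← Cardinal.lift_mul, Cardinal.mul_eq_self hκ]
    have h4 : #{r : Fib // Bad r} ≤ κ := by
      rw [← Cardinal.lift_le.{u+1}]
      calc Cardinal.lift.{u+1} #{r : Fib // Bad r}
          ≤ Cardinal.lift.{u} #T := h2
        _ = #T := Cardinal.lift_id'.{u, u+1} _
        _ ≤ Cardinal.lift.{u+1} κ := h3
    -- put things together
    have h5 : #Fib ≤ κ := by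
      have := Cardinal.mk_sum_compl {r : Fib | Bad r}
      have heq : #({r : Fib | Bad r} : Set Fib) + #({r : Fib | Bad r}ᶜ : Set Fib) = #Fib := this
      calc #Fib = #({r : Fib | Bad r} : Set Fib) + #({r : Fib | Bad r}ᶜ : Set Fib) := heq.symm
        _ ≤ κ + 1 := add_le_add h4 h1
        _ ≤ κ + κ := add_le_add_right (Cardinal.one_le_aleph0.trans hκ) κ
        _ = κ := Cardinal.add_eq_self hκ
    exact (Order.lt_succ κ).not_ge (hmany.trans h5)
end

section
/- Let κ be an infinite cardinal with cf(κ) > ℵ₀ and let (S_i)_{i<κ}, S*, (π_i)_{i<κ}, (ρ_{i,j})_{i≤j<κ} be a coherent restriction system as in the context, with |S_i| < κ for every i < κ. If |S*| ≥ κ⁺, then there exist a strictly increasing sequence (j_n)_{n<ω} of ordinals below κ and a binary tree of elements (p_s)_{s ∈ 2^{<ω}} with p_s ∈ S_{j_n} for each s of length n, such that for every s of length n: ρ_{j_n, j_{n+1}}(p_{s⌢0}) = ρ_{j_n, j_{n+1}}(p_{s⌢1}) = p_s and p_{s⌢0} ≠ p_{s⌢1}. Consequently, the inverse limit along this countable subchain,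 namely the set of threads {(q_n)_{n<ω} ∈ ∏_{n<ω} S_{j_n} : ρ_{j_m, j_n}(q_n) = q_m for all m ≤ n < ω}, has cardinality at least 2^{ℵ₀}. -/
/-!
A coherent restriction system (abstracting restriction maps on Galois types over an
increasing continuous chain of models of length κ with union M*): an infinite cardinal κ
with cf(κ) > ℵ₀, sets `S i` for `i < κ.ord`, a set `Sstar`, maps `π i : Sstar → S i` and
`ρ i j : S j → S i` for `i ≤ j < κ.ord`, with ρ compatible (identity, composition,
`ρ i j ∘ π j = π i`) and such that `p ↦ (π i p)_i` is injective.

STATEMENT: if `|S i| < κ` for all `i < κ` and `|Sstar| ≥ κ⁺`, then there are a strictly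
increasing sequence `(j n)_{n<ω}` of ordinals below κ and a binary tree `(p s)` of
elements, `p s ∈ S (j n)` for `s : Fin n → Bool`, such that both immediate successors of
`p s` restrict to `p s` and differ; consequently the set of threads of the inverse system
along the subchain `(j n)` has cardinality at least `2 ^ ℵ₀`.
-/

universe u

open Cardinal



lemma myMk_le_of_fibers {κ : Cardinal.{u}} (hκ : ℵ₀ ≤ κ) {α β : Type u}
    (hβ : #β ≤ κ) (f : α → β) (A : Set α) (hfib : ∀ v, #{a ∈ A | f a = v} ≤ κ) :
    #A ≤ κ := by
  have e : #A = Cardinal.sum fun v : β => #{a : A | f (a : α) = v} := by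
    rw [← Cardinal.mk_sigma]
    exact Cardinal.mk_congr (Equiv.sigmaFiberEquiv fun a : A => f a)|>.symm
  have hfib' : ∀ v : β, #{a : A | f (a : α) = v} ≤ κ := by
    intro v
    have := Cardinal.mk_congr (Equiv.subtypeSubtypeEquivSubtypeInter (· ∈ A) (fun a => f a = v))
    calc #{a : A | f (a : α) = v} = #{a : α | a ∈ A ∧ f a = v} := this
    _ ≤ κ := hfib v
  calc #A = _ := e
    _ ≤ Cardinal.sum fun _ : β => κ := Cardinal.sum_le_sum _ _ hfib'
    _ = #β * κ := Cardinal.sum_const' _ _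
    _ ≤ κ * κ := by exact mul_le_mul' hβ le_rfl
    _ = κ := Cardinal.mul_eq_self hκ

lemma myFiber_large {κ : Cardinal.{u}} (hκ : ℵ₀ ≤ κ) {α β : Type u}
    (hβ : #β ≤ κ) (f : α → β) (A : Set α) (hA : Order.succ κ ≤ #A) :
    ∃ v : β, Order.succ κ ≤ #{a ∈ A | f a = v} := by
  by_contra h
  push_neg at h
  have h' : ∀ v, #{a ∈ A | f a = v} ≤ κ := fun v => Order.lt_succ_iff.mp (h v)
  exact absurd (myMk_le_of_fibers hκ hβ f A h') (not_le.mpr (Order.succ_le_iff.mp hA))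
open Cardinal

lemma mySplit {κ : Cardinal.{u}} (hκ : ℵ₀ ≤ κ)
    (S : Ordinal.{u} → Type u) (Sstar : Type u)
    (π : ∀ i, i < κ.ord → Sstar → S i)
    (ρ : ∀ i j, i ≤ j → j < κ.ord → S j → S i)
    (hπρ : ∀ i j (hij : i ≤ j) (hj : j < κ.ord) (p : Sstar),
      ρ i j hij hj (π j hj p) = π i (lt_of_le_of_lt hij hj) p)
    (hinj : ∀ p q : Sstar, (∀ i (hi : i < κ.ord), π i hi p = π i hi q) → p = q)
    (hsmall : ∀ i (hi : i < κ.ord), #(S i) < κ)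
    (j0 : Ordinal.{u}) (hj0 : j0 < κ.ord) (A : Set Sstar) (hA : Order.succ κ ≤ #A) :
    ∃ j1, j0 < j1 ∧ ∃ h1 : j1 < κ.ord, ∃ v0 v1 : S j1, v0 ≠ v1 ∧
      Order.succ κ ≤ #{a ∈ A | π j1 h1 a = v0} ∧
      Order.succ κ ≤ #{a ∈ A | π j1 h1 a = v1} := by
  have holim : Order.IsSuccLimit κ.ord := Cardinal.isSuccLimit_ord hκ
  by_contra hcon
  push_neg at hcon
  have H : ∀ j1 (h0 : j0 < j1) (h1 : j1 < κ.ord) (v0 v1 : S j1),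
      Order.succ κ ≤ #{a ∈ A | π j1 h1 a = v0} →
      Order.succ κ ≤ #{a ∈ A | π j1 h1 a = v1} → v0 = v1 := by
    intro j1 h0 h1 v0 v1 hv0 hv1
    by_contra hne
    exact absurd hv1 (not_le.mpr (hcon j1 h0 h1 v0 v1 hne hv0))
  -- choose a large fiber at every index
  have hv : ∀ i (hi : i < κ.ord), ∃ v : S i, Order.succ κ ≤ #{a ∈ A | π i hi a = v} :=
    fun i hi => myFiber_large hκ (hsmall i hi).le (π i hi) A hA
  classical
  let v : ∀ i (hi : i < κ.ord), S i := fun i hi => (hv i hi).choose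
  let F : ∀ i, i < κ.ord → Set Sstar := fun i hi => {a ∈ A | π i hi a = v i hi}
  have hFlarge : ∀ i (hi : i < κ.ord), Order.succ κ ≤ #(F i hi) := fun i hi => (hv i hi).choose_spec
  have hj0' : j0 + 1 < κ.ord := holim.add_one_lt hj0
  -- complements of big fibers are small, above j0
  have hAF : ∀ i (hi : i < κ.ord) (h0 : j0 < i), #(A \ F i hi : Set Sstar) ≤ κ := by
    intro i hi h0
    apply myMk_le_of_fibers hκ (hsmall i hi).le (π i hi)
    intro w
    by_cases hw : w = v i hi
    · have : {a ∈ (A \ F i hi) | π i hi a = w} = ∅ := by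
        ext a; simp only [Set.mem_setOf_eq, Set.mem_empty_iff_false, iff_false]
        rintro ⟨⟨haA, haF⟩, haw⟩
        exact haF ⟨haA, by rw [haw, hw]⟩
      rw [this]; simp [hκ.trans' aleph0_pos.le]
    · by_contra hbig'
      push_neg at hbig'
      have hsub : {a ∈ (A \ F i hi) | π i hi a = w} ⊆ {a ∈ A | π i hi a = w} := by
        rintro a ⟨⟨haA, _⟩, haw⟩; exact ⟨haA, haw⟩
      have : Order.succ κ ≤ #{a ∈ A | π i hi a = w} :=
        le_trans (Order.succ_le_of_lt hbig') (Cardinal.mk_le_mk_of_subset hsub)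
      exact hw (H i h0 hi w (v i hi) this (hFlarge i hi))
  -- set up index over a small type
  let e : κ.ord.ToType → Ordinal.{u} := fun t => ((Ordinal.ToType.mk (o := κ.ord)).symm t : Ordinal)
  have he : ∀ t, e t < κ.ord := fun t => ((Ordinal.ToType.mk (o := κ.ord)).symm t).2
  let m : κ.ord.ToType → Ordinal.{u} := fun t => max (e t) (j0 + 1)
  have hm : ∀ t, m t < κ.ord := fun t => max_lt (he t) hj0'
  have hm0 : ∀ t, j0 < m t := fun t =>
    lt_of_lt_of_le (by rw [Ordinal.add_one_eq_succ]; exact Order.lt_succ j0) (le_max_right _ _)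
  let G : κ.ord.ToType → Set Sstar := fun t => A \ F (m t) (hm t)
  -- the intersection of all the big fibers is a subsingleton
  have hsub : (A ∩ ⋂ t, F (m t) (hm t)).Subsingleton := by
    intro a ha b hb
    apply hinj
    -- first: they agree at all indices > j0
    have key : ∀ i (hi : i < κ.ord) (h0 : j0 < i), π i hi a = π i hi b := by
      intro i hi h0
      have hit : ∃ t, m t = i := by
        refine ⟨Ordinal.ToType.mk (o := κ.ord) ⟨i, hi⟩, ?_⟩
        have : e (Ordinal.ToType.mk (o := κ.ord) ⟨i, hi⟩) = i := by
          simp [e]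
        rw [show m _ = max (e _) (j0+1) from rfl, this]
        exact max_eq_left (by rw [Ordinal.add_one_eq_succ]; exact Order.succ_le_of_lt h0)
      obtain ⟨t, ht⟩ := hit
      subst ht
      have ha' : a ∈ F (m t) (hm t) := Set.mem_iInter.mp ha.2 t
      have hb' : b ∈ F (m t) (hm t) := Set.mem_iInter.mp hb.2 t
      rw [ha'.2, hb'.2]
    intro i hi
    have h1 : max i (j0 + 1) < κ.ord := max_lt hi hj0'
    have h0 : j0 < max i (j0 + 1) := lt_of_lt_of_le
      (by rw [Ordinal.add_one_eq_succ]; exact Order.lt_succ j0) (le_max_right _ _)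
    have hle : i ≤ max i (j0 + 1) := le_max_left _ _
    have := key _ h1 h0
    have ea := hπρ i _ hle h1 a
    have eb := hπρ i _ hle h1 b
    rw [← ea, ← eb, this]
  -- covering
  have hcover : A ⊆ (A ∩ ⋂ t, F (m t) (hm t)) ∪ ⋃ t, G t := by
    intro a ha
    by_cases h : ∀ t, a ∈ F (m t) (hm t)
    · exact Or.inl ⟨ha, Set.mem_iInter.mpr h⟩
    · push_neg at h
      obtain ⟨t, ht⟩ := h
      exact Or.inr (Set.mem_iUnion.mpr ⟨t, ⟨ha, ht⟩⟩)
  -- counting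
  have hU : #(⋃ t, G t : Set Sstar) ≤ κ := by
    calc #(⋃ t, G t : Set Sstar) ≤ #(κ.ord.ToType) * ⨆ t, #(G t) := Cardinal.mk_iUnion_le _
      _ ≤ κ * κ := by
          apply mul_le_mul'
          · rw [Cardinal.mk_ord_toType]
          · exact ciSup_le' fun t => hAF (m t) (hm t) (hm0 t)
      _ = κ := Cardinal.mul_eq_self hκ
  have hbound : #A ≤ κ := by
    calc #A ≤ #((A ∩ ⋂ t, F (m t) (hm t)) ∪ ⋃ t, G t : Set Sstar) :=
        Cardinal.mk_le_mk_of_subset hcover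
      _ ≤ #(A ∩ ⋂ t, F (m t) (hm t) : Set Sstar) + #(⋃ t, G t : Set Sstar) :=
        Cardinal.mk_union_le _ _
      _ ≤ 1 + κ := add_le_add (Cardinal.mk_le_one_iff_set_subsingleton.mpr hsub) hU
      _ ≤ κ + κ := add_le_add_left (Cardinal.one_le_aleph0.trans hκ) κ
      _ = κ := Cardinal.add_eq_self hκ
  exact absurd hbound (not_le.mpr (Order.succ_le_iff.mp hA))

structure MySt (κ : Cardinal.{u}) (S : Ordinal.{u} → Type u) (Sstar : Type u)
    (π : ∀ i, i < κ.ord → Sstar → S i) (n : ℕ) where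
  j : Ordinal.{u}
  hj : j < κ.ord
  A : (Fin n → Bool) → Set Sstar
  large : ∀ s, Order.succ κ ≤ #(A s)
  const : ∀ s, ∀ a ∈ A s, ∀ b ∈ A s, π j hj a = π j hj b

lemma myStep {κ : Cardinal.{u}} (hκ : ℵ₀ ≤ κ)
    {S : Ordinal.{u} → Type u} {Sstar : Type u}
    {π : ∀ i, i < κ.ord → Sstar → S i}
    (ρ : ∀ i j, i ≤ j → j < κ.ord → S j → S i)
    (hπρ : ∀ i j (hij : i ≤ j) (hj : j < κ.ord) (p : Sstar),
      ρ i j hij hj (π j hj p) = π i (lt_of_le_of_lt hij hj) p)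
    (hinj : ∀ p q : Sstar, (∀ i (hi : i < κ.ord), π i hi p = π i hi q) → p = q)
    (hsmall : ∀ i (hi : i < κ.ord), #(S i) < κ)
    {n : ℕ} (X : MySt κ S Sstar π n) :
    ∃ Y : MySt κ S Sstar π (n + 1), X.j < Y.j ∧
      (∀ (s : Fin n → Bool) (b : Bool), Y.A (Fin.snoc s b) ⊆ X.A s) ∧
      (∀ (s : Fin n → Bool), ∀ a ∈ Y.A (Fin.snoc s false), ∀ b ∈ Y.A (Fin.snoc s true),
        π Y.j Y.hj a ≠ π Y.j Y.hj b) := by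
  classical
  have holim : Order.IsSuccLimit κ.ord := Cardinal.isSuccLimit_ord hκ
  -- split each A s
  have hsplit : ∀ s : Fin n → Bool, ∃ j1, X.j < j1 ∧ ∃ h1 : j1 < κ.ord, ∃ v0 v1 : S j1,
      v0 ≠ v1 ∧ Order.succ κ ≤ #{a ∈ X.A s | π j1 h1 a = v0} ∧
      Order.succ κ ≤ #{a ∈ X.A s | π j1 h1 a = v1} :=
    fun s => mySplit hκ S Sstar π ρ hπρ hinj hsmall X.j X.hj (X.A s) (X.large s)
  let j1 : (Fin n → Bool) → Ordinal.{u} := fun s => (hsplit s).choose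
  have hspec := fun s => (hsplit s).choose_spec
  let J : Ordinal.{u} := Finset.univ.sup j1
  have hj1J : ∀ s, j1 s ≤ J := fun s => Finset.le_sup (Finset.mem_univ s)
  have hj1lt : ∀ s, j1 s < κ.ord := fun s => (hspec s).2.choose
  have hJlt : J < κ.ord := by
    apply Finset.sup_lt_iff (show (⊥ : Ordinal.{u}) < κ.ord from holim.pos) |>.mpr
    exact fun s _ => hj1lt s
  have hXJ : X.j < J := lt_of_lt_of_le (hspec default).1 (hj1J default)
  -- the two large fibers at j1 s
  let v : ∀ s (b : Bool), S (j1 s) := fun s b =>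
    if b then (hspec s).2.choose_spec.choose_spec.choose else (hspec s).2.choose_spec.choose
  have hvne : ∀ s, v s false ≠ v s true := fun s =>
    (hspec s).2.choose_spec.choose_spec.choose_spec.1
  let B : ∀ (s : Fin n → Bool) (b : Bool), Set Sstar := fun s b =>
    {a ∈ X.A s | π (j1 s) (hj1lt s) a = v s b}
  have hBlarge : ∀ s b, Order.succ κ ≤ #(B s b) := by
    intro s b
    cases b
    · exact (hspec s).2.choose_spec.choose_spec.choose_spec.2.1
    · exact (hspec s).2.choose_spec.choose_spec.choose_spec.2.2
  -- refine to constant fibers at J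
  have hC : ∀ s b, ∃ w : S J, Order.succ κ ≤ #{a ∈ B s b | π J hJlt a = w} := fun s b =>
    myFiber_large hκ (hsmall J hJlt).le (π J hJlt) (B s b) (hBlarge s b)
  let w : ∀ s (b : Bool), S J := fun s b => (hC s b).choose
  let C : ∀ (s : Fin n → Bool) (b : Bool), Set Sstar := fun s b =>
    {a ∈ B s b | π J hJlt a = w s b}
  have hClarge : ∀ s b, Order.succ κ ≤ #(C s b) := fun s b => (hC s b).choose_spec
  refine ⟨⟨J, hJlt, fun t => C (fun k => t k.castSucc) (t (Fin.last n)), ?_, ?_⟩, hXJ, ?_, ?_⟩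
  · intro t; exact hClarge _ _
  · rintro t a ⟨_, ha⟩ b ⟨_, hb⟩; rw [ha, hb]
  · intro s b x hx
    simp only [Fin.snoc_castSucc, Fin.snoc_last] at hx
    exact hx.1.1
  · intro s a ha b hb
    simp only [Fin.snoc_castSucc, Fin.snoc_last] at ha hb
    intro hcontra
    apply hvne s
    have h0 : π (j1 s) (hj1lt s) a = v s false := ha.1.2
    have h1 : π (j1 s) (hj1lt s) b = v s true := hb.1.2
    have ea := hπρ (j1 s) J (hj1J s) hJlt a
    have eb := hπρ (j1 s) J (hj1J s) hJlt b
    rw [ha.2, hb.2] at *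
    calc v s false = π (j1 s) (lt_of_le_of_lt (hj1J s) hJlt) a := h0.symm
      _ = ρ (j1 s) J (hj1J s) hJlt (w s false) := ea.symm
      _ = ρ (j1 s) J (hj1J s) hJlt (w s true) := by rw [hcontra]
      _ = π (j1 s) (lt_of_le_of_lt (hj1J s) hJlt) b := eb
      _ = v s true := h1

theorem binary_tree_of_types_and_many_threads
    (κ : Cardinal.{u}) (hκ : ℵ₀ ≤ κ) (hcf : ℵ₀ < κ.ord.cof)
    (S : Ordinal.{u} → Type u) (Sstar : Type u)
    (π : ∀ i, i < κ.ord → Sstar → S i)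
    (ρ : ∀ i j, i ≤ j → j < κ.ord → S j → S i)
    (hρ_id : ∀ i (hi : i < κ.ord) (p : S i), ρ i i le_rfl hi p = p)
    (hρ_comp : ∀ i j k (hij : i ≤ j) (hjk : j ≤ k) (hk : k < κ.ord) (p : S k),
      ρ i j hij (lt_of_le_of_lt hjk hk) (ρ j k hjk hk p) = ρ i k (hij.trans hjk) hk p)
    (hπρ : ∀ i j (hij : i ≤ j) (hj : j < κ.ord) (p : Sstar),
      ρ i j hij hj (π j hj p) = π i (lt_of_le_of_lt hij hj) p)
    (hinj : ∀ p q : Sstar, (∀ i (hi : i < κ.ord), π i hi p = π i hi q) → p = q)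
    (hsmall : ∀ i (hi : i < κ.ord), #(S i) < κ)
    (hbig : Order.succ κ ≤ #Sstar) :
    ∃ j : ℕ → Ordinal.{u}, ∃ hmono : StrictMono j, ∃ hlt : ∀ n, j n < κ.ord,
      (∃ p : ∀ n, (Fin n → Bool) → S (j n),
        ∀ n (s : Fin n → Bool),
          (∀ b : Bool, ρ (j n) (j (n + 1)) (hmono.monotone (Nat.le_succ n)) (hlt (n + 1))
              (p (n + 1) (Fin.snoc s b)) = p n s) ∧
          p (n + 1) (Fin.snoc s false) ≠ p (n + 1) (Fin.snoc s true)) ∧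
      (2 : Cardinal.{u}) ^ (ℵ₀ : Cardinal.{u}) ≤
        #{q : ∀ n, S (j n) //
          ∀ m n (hmn : m ≤ n), ρ (j m) (j n) (hmono.monotone hmn) (hlt n) (q n) = q m} := by
  classical
  have holim : Order.IsSuccLimit κ.ord := Cardinal.isSuccLimit_ord hκ
  -- initial state
  have h0lt : (0 : Ordinal.{u}) < κ.ord := holim.pos
  have hinit : ∃ v : S 0, Order.succ κ ≤ #{a ∈ (Set.univ : Set Sstar) | π 0 h0lt a = v} := by
    apply myFiber_large hκ (hsmall 0 h0lt).le (π 0 h0lt)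
    rwa [Cardinal.mk_univ]
  let init : MySt κ S Sstar π 0 :=
    ⟨0, h0lt, fun _ => {a ∈ (Set.univ : Set Sstar) | π 0 h0lt a = hinit.choose},
      fun _ => hinit.choose_spec, fun _ a ha b hb => by rw [ha.2, hb.2]⟩
  -- the chain of states
  let chain : ∀ n, MySt κ S Sstar π n := fun n =>
    Nat.rec init (fun _ X => (myStep hκ ρ hπρ hinj hsmall X).choose) n
  have hchain : ∀ n, chain (n + 1) = (myStep hκ ρ hπρ hinj hsmall (chain n)).choose :=
    fun _ => rfl
  have spec := fun n => (myStep hκ ρ hπρ hinj hsmall (chain n)).choose_spec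
  set j : ℕ → Ordinal.{u} := fun n => (chain n).j with hj_def
  have hlt : ∀ n, j n < κ.ord := fun n => (chain n).hj
  have hmono : StrictMono j := by
    apply strictMono_nat_of_lt_succ
    intro n
    have := (spec n).1
    rw [← hchain n] at this
    exact this
  have hsub : ∀ n (s : Fin n → Bool) (b : Bool),
      (chain (n + 1)).A (Fin.snoc s b) ⊆ (chain n).A s := by
    intro n
    have := (spec n).2.1
    rw [← hchain n] at this
    exact this
  have hdiff : ∀ n (s : Fin n → Bool), ∀ a ∈ (chain (n + 1)).A (Fin.snoc s false),
      ∀ b ∈ (chain (n + 1)).A (Fin.snoc s true),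
      π (j (n + 1)) (hlt (n + 1)) a ≠ π (j (n + 1)) (hlt (n + 1)) b := by
    intro n
    have := (spec n).2.2
    rw [← hchain n] at this
    exact this
  -- choose representatives
  have hne : ∀ n (s : Fin n → Bool), ((chain n).A s).Nonempty := by
    intro n s
    have h1 : (0 : Cardinal.{u}) < #((chain n).A s) :=
      lt_of_le_of_lt (zero_le : (0 : Cardinal.{u}) ≤ κ) (Order.succ_le_iff.mp ((chain n).large s))
    have h2 : Nonempty ((chain n).A s) := Cardinal.mk_ne_zero_iff.mp (ne_of_gt h1)
    exact Set.nonempty_coe_sort.mp h2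
  let a : ∀ n (s : Fin n → Bool), Sstar := fun n s => (hne n s).some
  have ha : ∀ n s, a n s ∈ (chain n).A s := fun n s => (hne n s).some_mem
  let p : ∀ n, (Fin n → Bool) → S (j n) := fun n s => π (j n) (hlt n) (a n s)
  have hpconst : ∀ n (s : Fin n → Bool), ∀ x ∈ (chain n).A s, π (j n) (hlt n) x = p n s :=
    fun n s x hx => (chain n).const s x hx (a n s) (ha n s)
  -- the tree property
  have htree : ∀ n (s : Fin n → Bool),
      (∀ b : Bool, ρ (j n) (j (n + 1)) (hmono.monotone (Nat.le_succ n)) (hlt (n + 1))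
          (p (n + 1) (Fin.snoc s b)) = p n s) ∧
      p (n + 1) (Fin.snoc s false) ≠ p (n + 1) (Fin.snoc s true) := by
    intro n s
    constructor
    · intro b
      have hx : a (n + 1) (Fin.snoc s b) ∈ (chain n).A s :=
        hsub n s b (ha (n + 1) (Fin.snoc s b))
      calc ρ (j n) (j (n + 1)) (hmono.monotone (Nat.le_succ n)) (hlt (n + 1))
            (p (n + 1) (Fin.snoc s b))
          = π (j n) (lt_of_le_of_lt (hmono.monotone (Nat.le_succ n)) (hlt (n + 1)))
              (a (n + 1) (Fin.snoc s b)) :=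
            hπρ (j n) (j (n + 1)) (hmono.monotone (Nat.le_succ n)) (hlt (n + 1)) _
        _ = p n s := hpconst n s _ hx
    · exact hdiff n s _ (ha (n + 1) (Fin.snoc s false)) _ (ha (n + 1) (Fin.snoc s true))
  refine ⟨j, hmono, hlt, ⟨p, htree⟩, ?_⟩
  -- threads
  have hsnoc : ∀ (x : ℕ → Bool) (n : ℕ),
      (fun k : Fin (n + 1) => x ↑k) = Fin.snoc (fun k : Fin n => x ↑k) (x n) := by
    intro x n
    funext k
    refine Fin.lastCases ?_ ?_ k
    · simp
    · intro i; simp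
  let br : (ℕ → Bool) → ∀ n, S (j n) := fun x n => p n (fun k => x ↑k)
  have hbr1 : ∀ (x : ℕ → Bool) (n : ℕ),
      ρ (j n) (j (n + 1)) (hmono.monotone (Nat.le_succ n)) (hlt (n + 1)) (br x (n + 1))
        = br x n := by
    intro x n
    have : br x (n + 1) = p (n + 1) (Fin.snoc (fun k : Fin n => x ↑k) (x n)) := by
      show p (n + 1) _ = _
      rw [hsnoc x n]
    rw [this]
    exact (htree n (fun k : Fin n => x ↑k)).1 (x n)
  have hbrco : ∀ (x : ℕ → Bool) (m n : ℕ) (hmn : m ≤ n),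
      ρ (j m) (j n) (hmono.monotone hmn) (hlt n) (br x n) = br x m := by
    intro x m n hmn
    induction n, hmn using Nat.le_induction with
    | base => exact hρ_id (j m) (hlt m) (br x m)
    | succ n hmn ih =>
      have := hρ_comp (j m) (j n) (j (n + 1)) (hmono.monotone hmn)
        (hmono.monotone (Nat.le_succ n)) (hlt (n + 1)) (br x (n + 1))
      rw [← this, hbr1 x n, ih]
  let T := {q : ∀ n, S (j n) //
    ∀ m n (hmn : m ≤ n), ρ (j m) (j n) (hmono.monotone hmn) (hlt n) (q n) = q m}
  let Φ : (ULift.{u} ℕ → ULift.{u} Bool) → T := fun x =>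
    ⟨br (fun n => (x ⟨n⟩).down), fun m n hmn => hbrco (fun k => (x ⟨k⟩).down) m n hmn⟩
  have hΦinj : Function.Injective Φ := by
    intro x y hxy
    by_contra hne'
    have hxy' : ∀ n, br (fun n => (x ⟨n⟩).down) n = br (fun n => (y ⟨n⟩).down) n :=
      fun n => congrFun (congrArg Subtype.val hxy) n
    set x' : ℕ → Bool := fun n => (x ⟨n⟩).down with hx'
    set y' : ℕ → Bool := fun n => (y ⟨n⟩).down with hy'
    have hex : ∃ n, x' n ≠ y' n := by
      by_contra hc
      push_neg at hc
      exact hne' (funext fun k => ULift.down_injective (hc k.down))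
    let n := Nat.find hex
    have hn : x' n ≠ y' n := Nat.find_spec hex
    have hmin : ∀ k < n, x' k = y' k := fun k hk => by
      by_contra hk'
      exact absurd (Nat.find_le hk') (not_le.mpr hk)
    have hsame : (fun k : Fin n => x' ↑k) = (fun k : Fin n => y' ↑k) :=
      funext fun k => hmin k k.2
    have h1 : br x' (n + 1) = p (n + 1) (Fin.snoc (fun k : Fin n => x' ↑k) (x' n)) := by
      show p (n + 1) _ = _
      rw [hsnoc x' n]
    have h2 : br y' (n + 1) = p (n + 1) (Fin.snoc (fun k : Fin n => x' ↑k) (y' n)) := by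
      show p (n + 1) _ = _
      rw [hsnoc y' n, hsame]
    have heq : p (n + 1) (Fin.snoc (fun k : Fin n => x' ↑k) (x' n))
        = p (n + 1) (Fin.snoc (fun k : Fin n => x' ↑k) (y' n)) := by
      rw [← h1, ← h2]
      exact hxy' (n + 1)
    have hd := (htree n (fun k : Fin n => x' ↑k)).2
    cases hbx : x' n <;> cases hby : y' n
    · exact hn (by rw [hbx, hby])
    · rw [hbx, hby] at heq; exact hd heq
    · rw [hbx, hby] at heq; exact hd heq.symm
    · exact hn (by rw [hbx, hby])
  have hcard : #(ULift.{u} ℕ → ULift.{u} Bool) = (2 : Cardinal.{u}) ^ (ℵ₀ : Cardinal.{u}) := by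
    rw [← Cardinal.power_def]
    simp
  calc (2 : Cardinal.{u}) ^ (ℵ₀ : Cardinal.{u}) = #(ULift.{u} ℕ → ULift.{u} Bool) := hcard.symm
    _ ≤ #T := Cardinal.mk_le_of_injective hΦinj
end

section
/- Let L be a countable first-order language and T a complete L-theory with infinite models. Let κ be an infinite cardinal with cf(κ) > ℵ₀. If T is stable in every infinite cardinal μ < κ, then T is stable in κ. -/
universe u

open Cardinal FirstOrder FirstOrder.Language

namespace StabilityTransfer

variable (L : FirstOrder.Language.{u, u})

/-- `S(M)`: the set of complete 1-types over the model `M`, i.e. complete types in one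
free variable of the elementary diagram of `M`. -/
abbrev typesOver (M : Type u) [L.Structure M] : Type u :=
  (L.elementaryDiagram M).CompleteType Unit

/-- `T` is stable in `λ`: `|S(M)| ≤ λ` for every model `M` of `T` of cardinality `λ`. -/
def IsStableIn (T : L.Theory) (lam : Cardinal.{u}) : Prop :=
  ∀ M : Theory.ModelType.{u, u, u} T, #M = lam → #(typesOver L M) ≤ lam

section AuxiliaryLemmas

open Set

variable {L}

private def tree {F : Type*} (root : F) (split : F → F × F) : List Bool → F
  | [] => root
  | b :: s => if b then (split (tree root split s)).1 else (split (tree root split s)).2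

private def branchList (σ : ℕ → Bool) : ℕ → List Bool
  | 0 => []
  | n + 1 => σ n :: branchList σ n

private theorem exists_countable_support {γ : Type u} (θ : L.Formula (γ ⊕ Unit)) :
    ∃ A : Set γ, A.Countable ∧ ∀ (ι : Type u) (g : ι → γ), A ⊆ Set.range g →
      ∃ θ' : L.Formula (ι ⊕ Unit),
        ∀ (P : Type u) (_ : L.Structure P) (c : γ → P) (v : Unit → P),
          θ'.Realize (Sum.elim (c ∘ g) v) ↔ θ.Realize (Sum.elim c v) := by
  classical
  refine ⟨Sum.inl ⁻¹' (θ.freeVarFinset : Set (γ ⊕ Unit)), ?_, fun ι g hA => ?_⟩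
  · exact ((θ.freeVarFinset.finite_toSet).preimage Sum.inl_injective.injOn).countable
  set s' : Set (γ ⊕ Unit) :=
    Sum.inl '' (Sum.inl ⁻¹' (θ.freeVarFinset : Set (γ ⊕ Unit))) ∪ Set.range Sum.inr with hs'
  have h1 : ↑θ.freeVarFinset ⊆ s' := by
    intro x hx
    rcases x with a | u
    · exact Or.inl ⟨a, hx, rfl⟩
    · exact Or.inr ⟨u, rfl⟩
  have key : ∀ x : γ, Sum.inl x ∈ s' → ∃ i, g i = x := by
    intro x hx
    rcases hx with ⟨a, ha, hax⟩ | ⟨u, hu⟩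
    · cases hax; exact hA ha
    · cases hu
  refine ⟨Formula.relabel
    (fun x => match x with
      | ⟨Sum.inl a, h⟩ => Sum.inl (key a h).choose
      | ⟨Sum.inr u, _⟩ => Sum.inr u) (θ.restrictFreeVar (Set.inclusion h1)),
    fun P iP c v => ?_⟩
  rw [Formula.realize_relabel]
  have h2 : (Sum.elim (c ∘ g) v) ∘ (fun x : ↥s' => match x with
      | ⟨Sum.inl a, h⟩ => Sum.inl (key a h).choose
      | ⟨Sum.inr u, _⟩ => Sum.inr u) = (Sum.elim c v) ∘ (Subtype.val) := by
    funext x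
    rcases x with ⟨a | u, h⟩
    · simp [(key a h).choose_spec]
    · rfl
  rw [h2]
  exact BoundedFormula.realize_restrictFreeVar' h1

private def cMap (Lb : FirstOrder.Language.{u, u}) (γ : Type u) (P : Type u)
    [((Lb[[γ]])[[Unit]]).Structure P] : γ → P :=
  letI i1 : (Lb[[γ]]).Structure P := ((Lb[[γ]]).lhomWithConstants Unit).reduct P
  fun a => ((Lb.con a : (Lb[[γ]]).Constants) : P)

private def uMap (Lb : FirstOrder.Language.{u, u}) (γ : Type u) (P : Type u)
    [((Lb[[γ]])[[Unit]]).Structure P] : Unit → P :=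
  fun u => (((Lb[[γ]]).con u : ((Lb[[γ]])[[Unit]]).Constants) : P)

section Aux2
variable {γ : Type u}

private theorem realizeE_aux (P : Type u) [i2 : ((L[[γ]])[[Unit]]).Structure P] [Nonempty P]
    (θ : L.Formula (γ ⊕ Unit)) :
    letI i1 : (L[[γ]]).Structure P := ((L[[γ]]).lhomWithConstants Unit).reduct P
    letI i0 : L.Structure P := (L.lhomWithConstants γ).reduct P
    ((Formula.equivSentence (BoundedFormula.constantsVarsEquiv.symm θ)).Realize P ↔
      Formula.Realize θ (Sum.elim (cMap L γ P) (uMap L γ P))) := by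
  letI i1 : (L[[γ]]).Structure P := ((L[[γ]]).lhomWithConstants Unit).reduct P
  letI i0 : L.Structure P := (L.lhomWithConstants γ).reduct P
  haveI hex1 : ((L[[γ]]).lhomWithConstants Unit).IsExpansionOn P :=
    LHom.isExpansionOn_reduct ((L[[γ]]).lhomWithConstants Unit) P
  haveI hex0 : (L.lhomWithConstants γ).IsExpansionOn P :=
    LHom.isExpansionOn_reduct (L.lhomWithConstants γ) P
  have h1 := Formula.realize_equivSentence (L := L[[γ]]) (α := Unit) (M := P)
    (BoundedFormula.constantsVarsEquiv.symm θ : (L[[γ]]).Formula Unit)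
  refine h1.trans ?_
  have h2 := BoundedFormula.realize_constantsVarsEquiv (M := P)
    (φ := (BoundedFormula.constantsVarsEquiv.symm θ : (L[[γ]]).BoundedFormula Unit 0))
    (v := fun u => (((L[[γ]]).con u) : P)) (xs := default)
  rw [Equiv.apply_symm_apply] at h2
  exact h2.symm

private def pStr (Lb : FirstOrder.Language.{u, u}) (γ : Type u) (P : Type u)
    [((Lb[[γ]])[[Unit]]).Structure P] (ι : Type u) (g : ι → γ) :
    (Lb[[ι]]).Structure P :=
  letI i1 : (Lb[[γ]]).Structure P := ((Lb[[γ]]).lhomWithConstants Unit).reduct P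
  letI i0 : Lb.Structure P := (Lb.lhomWithConstants γ).reduct P
  letI ic : (constantsOn ι).Structure P := constantsOn.structure (fun i => cMap Lb γ P (g i))
  inferInstance

private theorem realizeEN_aux (P : Type u) [i2 : ((L[[γ]])[[Unit]]).Structure P] [Nonempty P]
    (ι : Type u) (g : ι → γ) (θ' : L.Formula (ι ⊕ Unit)) (v : Unit → P) :
    letI i1 : (L[[γ]]).Structure P := ((L[[γ]]).lhomWithConstants Unit).reduct P
    letI i0 : L.Structure P := (L.lhomWithConstants γ).reduct P
    letI iN : (L[[ι]]).Structure P := pStr L γ P ι g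
    (Formula.Realize (BoundedFormula.constantsVarsEquiv.symm θ' : (L[[ι]]).Formula Unit) v ↔
      Formula.Realize θ' (Sum.elim (fun i => cMap L γ P (g i)) v)) := by
  letI i1 : (L[[γ]]).Structure P := ((L[[γ]]).lhomWithConstants Unit).reduct P
  letI i0 : L.Structure P := (L.lhomWithConstants γ).reduct P
  letI ic : (constantsOn ι).Structure P := constantsOn.structure (fun i => cMap L γ P (g i))
  letI iN : (L[[ι]]).Structure P := pStr L γ P ι g
  haveI hexp : (L.lhomWithConstants ι).IsExpansionOn P := ⟨fun _ _ => rfl, fun _ _ => rfl⟩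
  have h2 := BoundedFormula.realize_constantsVarsEquiv (M := P)
    (φ := (BoundedFormula.constantsVarsEquiv.symm θ' : (L[[ι]]).BoundedFormula Unit 0))
    (v := v) (xs := default)
  rw [Equiv.apply_symm_apply] at h2
  exact h2.symm

private theorem mem_iff_realize {L' : FirstOrder.Language.{u, u}} {T' : L'.Theory} {α : Type}
    (p : T'.CompleteType α) (P : Theory.ModelType.{u, u, u} (p : L'[[α]].Theory))
    (χ : L'[[α]].Sentence) : χ ∈ p ↔ P ⊨ χ := by
  constructor
  · exact fun h => Theory.realize_sentence_of_mem (p : L'[[α]].Theory) h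
  · intro h
    by_contra hn
    have h2 := Theory.realize_sentence_of_mem (T := (p : L'[[α]].Theory))
      (M := P) ((p.not_mem_iff χ).2 hn)
    rw [Sentence.realize_not] at h2
    exact h2 h

private theorem pStr_models_elemDiagram {M : Type u} [iM : L.Structure M]
    (N : L.ElementarySubstructure M) (P : Type u) [i2 : ((L[[M]])[[Unit]]).Structure P]
    [Nonempty P]
    (hP : ∀ χ ∈ ((L[[M]]).lhomWithConstants Unit).onTheory (L.elementaryDiagram M),
      χ.Realize P) :
    letI iN : (L[[↥N]]).Structure P := pStr L M P ↥N ((↑) : ↥N → M)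
    (L.elementaryDiagram ↥N).Model P := by
  letI i1 : (L[[M]]).Structure P := ((L[[M]]).lhomWithConstants Unit).reduct P
  letI i0 : L.Structure P := (L.lhomWithConstants M).reduct P
  letI ic : (constantsOn ↥N).Structure P :=
    constantsOn.structure (fun i : ↥N => cMap L M P ↑i)
  letI iN : (L[[↥N]]).Structure P := pStr L M P ↥N ((↑) : ↥N → M)
  haveI hex1 : ((L[[M]]).lhomWithConstants Unit).IsExpansionOn P :=
    LHom.isExpansionOn_reduct ((L[[M]]).lhomWithConstants Unit) P
  haveI hex0 : (L.lhomWithConstants M).IsExpansionOn P :=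
    LHom.isExpansionOn_reduct (L.lhomWithConstants M) P
  haveI hexN : (L.lhomWithConstants ↥N).IsExpansionOn P := ⟨fun _ _ => rfl, fun _ _ => rfl⟩
  rw [Theory.model_iff]
  intro χ0 hχ0
  have hN : (↥N) ⊨ χ0 := mem_completeTheory.1 hχ0
  set θ0 : L.Formula ↥N := Formula.equivSentence.symm χ0 with hθ0
  have hχ0' : χ0 = Formula.equivSentence θ0 := (Equiv.apply_symm_apply _ _).symm
  rw [hχ0', Formula.realize_equivSentence] at hN
  have h2 : Formula.Realize θ0 (fun a : ↥N => ((a : M))) := by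
    have := (N.subtype.map_formula θ0 (fun a : ↥N => a)).2 ?_
    · convert this using 2
      rfl
    · convert hN using 2
      rfl
  set θM : L.Formula M := Formula.relabel (fun a : ↥N => (a : M)) θ0 with hθM
  have h3 : Formula.Realize θM (fun a : M => a) := by
    rw [hθM, Formula.realize_relabel]
    exact h2
  have hmem : Formula.equivSentence θM ∈ L.elementaryDiagram M := by
    rw [mem_completeTheory, Formula.realize_equivSentence]
    convert h3 using 2
    rfl
  have h5 := hP (((L[[M]]).lhomWithConstants Unit).onSentence (Formula.equivSentence θM))
    ⟨_, hmem, rfl⟩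
  rw [LHom.realize_onSentence] at h5
  rw [Formula.realize_equivSentence] at h5
  rw [hθM, Formula.realize_relabel] at h5
  rw [hχ0', Formula.realize_equivSentence]
  convert h5 using 2
  rfl

end Aux2

private theorem key (T : L.Theory) (κ : Cardinal.{u})
    (hκ : ℵ₀ < κ) (hL : L.card ≤ ℵ₀) (h0 : IsStableIn L T ℵ₀)
    (γ : Type u) [iγ : L.Structure γ] [hTγ : T.Model γ] [Nonempty γ] (hMo : #γ = κ) :
    #((L.elementaryDiagram γ).CompleteType Unit) ≤ κ := by
  classical
  by_contra hb
  push_neg at hb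
  -- Notation
  set F := L.Formula (γ ⊕ Unit) with hF
  let E : F → ((L[[γ]])[[Unit]]).Sentence :=
    fun θ => Formula.equivSentence (BoundedFormula.constantsVarsEquiv.symm θ)
  set S := (L.elementaryDiagram γ).CompleteType Unit with hS
  let md : (p : S) → Theory.ModelType.{u, u, u} (p : ((L[[γ]])[[Unit]]).Theory) :=
    fun p => p.isMaximal.1.some
  -- Boolean facts about membership of `E`-sentences
  have hInfMem : ∀ (p : S) (θ₁ θ₂ : F), E (θ₁ ⊓ θ₂) ∈ p ↔ (E θ₁ ∈ p ∧ E θ₂ ∈ p) := by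
    intro p θ₁ θ₂
    rw [mem_iff_realize p (md p) (E (θ₁ ⊓ θ₂)), mem_iff_realize p (md p) (E θ₁),
      mem_iff_realize p (md p) (E θ₂)]
    letI i1 : (L[[γ]]).Structure (md p) := ((L[[γ]]).lhomWithConstants Unit).reduct (md p)
    letI i0 : L.Structure (md p) := (L.lhomWithConstants γ).reduct (md p)
    have e12 := realizeE_aux (md p) (θ₁ ⊓ θ₂)
    have e1 := realizeE_aux (md p) θ₁
    have e2 := realizeE_aux (md p) θ₂
    exact e12.trans (Formula.realize_inf.trans (and_congr e1.symm e2.symm))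
  have hNotMem : ∀ (p : S) (θ : F), E θ.not ∈ p ↔ ¬ (E θ ∈ p) := by
    intro p θ
    rw [mem_iff_realize p (md p) (E θ.not), mem_iff_realize p (md p) (E θ)]
    letI i1 : (L[[γ]]).Structure (md p) := ((L[[γ]]).lhomWithConstants Unit).reduct (md p)
    letI i0 : L.Structure (md p) := (L.lhomWithConstants γ).reduct (md p)
    have e1 := realizeE_aux (md p) θ.not
    have e2 := realizeE_aux (md p) θ
    exact e1.trans (Formula.realize_not.trans (not_congr e2.symm))
  have hTopMem : ∀ p : S, E ⊤ ∈ p := by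
    intro p
    rw [mem_iff_realize p (md p) (E ⊤)]
    letI i1 : (L[[γ]]).Structure (md p) := ((L[[γ]]).lhomWithConstants Unit).reduct (md p)
    letI i0 : L.Structure (md p) := (L.lhomWithConstants γ).reduct (md p)
    exact (realizeE_aux (md p) ⊤).2 (Formula.realize_top.2 trivial)
  -- separation of distinct types
  have hSep : ∀ p q : S, p ≠ q → ∃ θ : F, E θ ∈ p ∧ E θ.not ∈ q := by
    intro p q hpq
    have hex : ∃ χ, ¬(χ ∈ p ↔ χ ∈ q) := by
      by_contra hc
      push_neg at hc
      exact hpq (SetLike.ext fun χ => hc χ)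
    obtain ⟨χ, hχ⟩ := hex
    have hE : E (BoundedFormula.constantsVarsEquiv (Formula.equivSentence.symm χ)) = χ := by
      simp only [E, Equiv.symm_apply_apply, Equiv.apply_symm_apply]
    by_cases h1 : χ ∈ p
    · have h2 : χ ∉ q := fun h => hχ ⟨fun _ => h, fun _ => h1⟩
      refine ⟨BoundedFormula.constantsVarsEquiv (Formula.equivSentence.symm χ), ?_, ?_⟩
      · rw [hE]; exact h1
      · rw [hNotMem, hE]; exact h2
    · have h2 : χ ∈ q := by
        by_contra h2
        exact hχ ⟨fun h => absurd h h1, fun h => absurd h h2⟩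
      refine ⟨(BoundedFormula.constantsVarsEquiv (Formula.equivSentence.symm χ)).not, ?_, ?_⟩
      · rw [hNotMem, hE]; exact h1
      · rw [hNotMem, hNotMem, hE]; exact not_not.2 h2
  -- the sets of types containing a given formula
  set Sset : F → Set S := fun θ => {p : S | E θ ∈ p} with hSset
  -- cardinality of formulas
  have hF : #F ≤ κ := by
    have hinj : Function.Injective (fun θ : F => (⟨0, θ⟩ : Σ n, L.BoundedFormula (γ ⊕ Unit) n)) :=
      sigma_mk_injective
    refine le_trans (mk_le_of_injective hinj) (le_trans BoundedFormula.card_le ?_)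
    have hsum : #(γ ⊕ Unit) = κ + 1 := by
      simp [mk_sum, hMo]
    rw [hsum]
    simp only [lift_id]
    have h1 : κ + 1 + L.card ≤ κ := by
      calc κ + 1 + L.card ≤ κ + κ + κ :=
            add_le_add (add_le_add le_rfl (le_trans one_le_aleph0 hκ.le)) (hL.trans hκ.le)
        _ = κ := by rw [Cardinal.add_eq_self hκ.le, Cardinal.add_eq_self hκ.le]
    exact max_le hκ.le h1
  -- the splitting lemma
  have hSplit : ∀ θ : F, κ < #(Sset θ) →
      ∃ ψ : F, κ < #(Sset (θ ⊓ ψ)) ∧ κ < #(Sset (θ ⊓ ψ.not))  := by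
    intro θ hθ
    by_contra hcon
    push_neg at hcon
    set U : Set S := ⋃ ψ : {ψ : F // #(Sset (θ ⊓ ψ)) ≤ κ}, Sset (θ ⊓ ψ.1) with hU
    have hU1 : #U ≤ κ := by
      refine le_trans (mk_iUnion_le _) (le_trans
        (mul_le_mul' (le_trans (mk_subtype_le _) hF) (ciSup_le' fun ψ => ψ.2)) ?_)
      exact le_of_eq (Cardinal.mul_eq_self hκ.le)
    have hU2 : (Sset θ \ U).Subsingleton := by
      intro p hp q hq
      by_contra hpq
      obtain ⟨ψ0, hψp, hψq⟩ := hSep p q hpq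
      have hp1 : p ∈ Sset (θ ⊓ ψ0) := (hInfMem p θ ψ0).2 ⟨hp.1, hψp⟩
      have hq1 : q ∈ Sset (θ ⊓ ψ0.not) := (hInfMem q θ ψ0.not).2 ⟨hq.1, hψq⟩
      rcases le_or_gt #(Sset (θ ⊓ ψ0)) κ with h | h
      · exact hp.2 (Set.mem_iUnion.2 ⟨⟨ψ0, h⟩, hp1⟩)
      · exact hq.2 (Set.mem_iUnion.2 ⟨⟨ψ0.not, hcon ψ0 h⟩, hq1⟩)
    have hle : #(Sset θ) ≤ κ := by
      have hsub : Sset θ ⊆ U ∪ (Sset θ \ U) := fun p hp =>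
        (em (p ∈ U)).elim Or.inl (fun h => Or.inr ⟨hp, h⟩)
      refine le_trans (mk_le_mk_of_subset hsub) (le_trans (mk_union_le _ _) ?_)
      calc #(↥U) + #(↥(Sset θ \ U)) ≤ κ + 1 :=
            add_le_add hU1 (Cardinal.mk_le_one_iff_set_subsingleton.2 hU2)
        _ ≤ κ + κ := add_le_add le_rfl (le_trans one_le_aleph0 hκ.le)
        _ = κ := Cardinal.add_eq_self hκ.le
    exact absurd hle (not_le.2 hθ)
  choose fc hc1 hc2 using hSplit
  set split : F → F × F := fun θ =>
    if h : κ < #(Sset θ) then (θ ⊓ fc θ h, θ ⊓ (fc θ h).not) else (⊤, ⊤) with hsplitdef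
  set t : List Bool → F := tree ⊤ split with ht
  have hBigT : ∀ s : List Bool, κ < #(Sset (t s)) := by
    intro s
    induction s with
    | nil =>
      have huniv : Sset (⊤ : F) = Set.univ := Set.eq_univ_of_forall (fun p => hTopMem p)
      have : #(Sset (⊤ : F)) = #S := by rw [huniv, mk_univ]
      show κ < #(Sset (tree ⊤ split []))
      rw [show tree (⊤ : F) split [] = ⊤ from rfl, this]
      exact hb
    | cons b s ih =>
      have hs : t (b :: s) = if b then (split (t s)).1 else (split (t s)).2 := rfl
      cases b
      · rw [hs]
        simp only [if_neg Bool.false_ne_true, hsplitdef, dif_pos ih]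
        exact hc2 (t s) ih
      · rw [hs]
        simp only [if_pos, hsplitdef, dif_pos ih]
        exact hc1 (t s) ih
  have hchild : ∀ s : List Bool, ∃ ψ : F,
      t (true :: s) = t s ⊓ ψ ∧ t (false :: s) = t s ⊓ ψ.not := by
    intro s
    refine ⟨fc (t s) (hBigT s), ?_, ?_⟩
    · show (if true then (split (t s)).1 else (split (t s)).2) = _
      simp only [if_pos, hsplitdef, dif_pos (hBigT s)]
    · show (if false then (split (t s)).1 else (split (t s)).2) = _
      simp only [if_neg Bool.false_ne_true, hsplitdef, dif_pos (hBigT s)]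
  -- branches
  set nd : (ℕ → Bool) → ℕ → F := fun σ n => t (branchList σ n) with hnd
  have hdown : ∀ (σ : ℕ → Bool) (n : ℕ) (p : S),
      p ∈ Sset (nd σ (n + 1)) → p ∈ Sset (nd σ n) := by
    intro σ n p hp
    obtain ⟨ψ, h1, h2⟩ := hchild (branchList σ n)
    have hp' : E (t (σ n :: branchList σ n)) ∈ p := hp
    cases hσ : σ n
    · rw [hσ, h2] at hp'
      exact ((hInfMem p _ _).1 hp').1
    · rw [hσ, h1] at hp'
      exact ((hInfMem p _ _).1 hp').1
  have hchain : ∀ (σ : ℕ → Bool) (k m : ℕ), m ≤ k → ∀ p : S,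
      p ∈ Sset (nd σ k) → p ∈ Sset (nd σ m) := by
    intro σ k
    induction k with
    | zero =>
      intro m hm p hp
      rw [Nat.le_zero.1 hm]
      exact hp
    | succ k ih =>
      intro m hm p hp
      rcases eq_or_lt_of_le hm with h | h
      · rw [h]; exact hp
      · exact ih m (Nat.lt_succ_iff.1 h) p (hdown σ k p hp)
  -- branch theories are satisfiable
  set TT : ((L[[γ]])[[Unit]]).Theory :=
    ((L[[γ]]).lhomWithConstants Unit).onTheory (L.elementaryDiagram γ) with hTT
  have hsat : ∀ σ : ℕ → Bool,
      ((TT ∪ Set.range (fun n => E (nd σ n))) : ((L[[γ]])[[Unit]]).Theory).IsSatisfiable := by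
    intro σ
    rw [Theory.isSatisfiable_iff_isFinitelySatisfiable]
    intro T0 hT0
    set m : ((L[[γ]])[[Unit]]).Sentence → ℕ :=
      fun χ => if h : ∃ n, χ = E (nd σ n) then h.choose else 0 with hm
    set k := T0.sup m with hk
    have hne : (Sset (nd σ k)).Nonempty := by
      by_contra hne
      rw [Set.not_nonempty_iff_eq_empty] at hne
      have hbig := hBigT (branchList σ k)
      rw [show Sset (t (branchList σ k)) = Sset (nd σ k) from rfl, hne] at hbig
      rw [mk_emptyCollection] at hbig
      exact not_lt_of_ge (zero_le : (0 : Cardinal.{u}) ≤ κ) hbig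
    obtain ⟨p, hp⟩ := hne
    have hreal : ∀ χ ∈ T0, (md p) ⊨ χ := by
      intro χ hχ
      rcases hT0 hχ with hχ1 | hr
      · exact Theory.realize_sentence_of_mem (p : ((L[[γ]])[[Unit]]).Theory) (p.subset hχ1)
      · obtain ⟨n, hn⟩ := hr
        have hex : ∃ n', χ = E (nd σ n') := ⟨n, hn.symm⟩
        have hmk : m χ = hex.choose := by rw [hm]; exact dif_pos hex
        have hχk : χ = E (nd σ (m χ)) := by rw [hmk]; exact hex.choose_spec
        have hmem : p ∈ Sset (nd σ (m χ)) := hchain σ k (m χ) (Finset.le_sup hχ) p hp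
        exact (mem_iff_realize p (md p) χ).1 (by rw [hχk]; exact hmem)
    exact @Theory.Model.isSatisfiable _ _ (md p) inferInstance inferInstance
      ((Theory.model_iff _).2 (fun χ hχ => hreal χ (Finset.mem_coe.1 hχ)))
  let Pm : (σ : ℕ → Bool) →
      Theory.ModelType.{u, u, u} (TT ∪ Set.range (fun n => E (nd σ n))) :=
    fun σ => (hsat σ).some
  have hPmTT : ∀ σ : ℕ → Bool, ∀ χ ∈ TT, (Pm σ) ⊨ χ := fun σ χ hχ =>
    Theory.realize_sentence_of_mem (TT ∪ Set.range (fun n => E (nd σ n)))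
      (Set.mem_union_left _ hχ)
  have hPn : ∀ (σ : ℕ → Bool) (n : ℕ), (Pm σ) ⊨ E (nd σ n) := fun σ n =>
    Theory.realize_sentence_of_mem (TT ∪ Set.range (fun n => E (nd σ n)))
      (Set.mem_union_right _ ⟨n, rfl⟩)
  -- countable support of the tree
  choose Asup hAcnt hAsub using fun s : List Bool => exists_countable_support (L := L) (t s)
  have hAc : (⋃ s : List Bool, Asup s).Countable := Set.countable_iUnion hAcnt
  obtain ⟨N, hAN, hNcard⟩ := exists_elementarySubstructure_card_eq L (M := γ)
    (⋃ s : List Bool, Asup s) (ℵ₀ : Cardinal.{u}) le_rfl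
    (by haveI := hAc.to_subtype; simpa using (mk_le_aleph0 : #(↥(⋃ s : List Bool, Asup s)) ≤ ℵ₀))
    (by simpa using hL)
    (by simpa [hMo] using hκ.le)
  simp only [lift_id] at hNcard
  have hrange : ∀ s : List Bool, Asup s ⊆ Set.range ((↑) : ↥N → γ) := by
    intro s
    rw [Subtype.range_coe_subtype]
    exact (Set.subset_iUnion Asup s).trans hAN
  choose θN hθN using fun s : List Bool => hAsub s ↥N ((↑) : ↥N → γ) (hrange s)
  -- the branch types over `N`
  have hq : ∀ σ : ℕ → Bool, ∃ q : (L.elementaryDiagram ↥N).CompleteType Unit,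
      ∀ s : List Bool,
        (Formula.equivSentence (BoundedFormula.constantsVarsEquiv.symm (θN s)) ∈ q ↔
          (Pm σ) ⊨ E (t s)) := by
    intro σ
    letI i1 : (L[[γ]]).Structure (Pm σ) := ((L[[γ]]).lhomWithConstants Unit).reduct (Pm σ)
    letI i0 : L.Structure (Pm σ) := (L.lhomWithConstants γ).reduct (Pm σ)
    letI ic : (constantsOn ↥N).Structure (Pm σ) :=
      constantsOn.structure (fun i : ↥N => cMap L γ (Pm σ) ↑i)
    letI iN : (L[[↥N]]).Structure (Pm σ) := pStr L γ (Pm σ) ↥N ((↑) : ↥N → γ)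
    haveI hmodN : (L.elementaryDiagram ↥N).Model (Pm σ) :=
      pStr_models_elemDiagram N (Pm σ) (hPmTT σ)
    refine ⟨(L.elementaryDiagram ↥N).typeOf (fun _ : Unit => uMap L γ (Pm σ) ()), fun s => ?_⟩
    rw [Theory.CompleteType.mem_typeOf, Equiv.symm_apply_apply]
    have h1 := realizeEN_aux (Pm σ) ↥N ((↑) : ↥N → γ) (θN s) (fun _ : Unit => uMap L γ (Pm σ) ())
    have h2 := hθN s (Pm σ) i0 (cMap L γ (Pm σ)) (fun _ : Unit => uMap L γ (Pm σ) ())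
    have h3 := realizeE_aux (Pm σ) (t s)
    exact h1.trans (h2.trans h3.symm)
  choose qf hqf using hq
  -- `qf` is injective
  have hqinj : Function.Injective qf := by
    intro σ τ hστ
    by_contra hne
    have hex : ∃ n, σ n ≠ τ n := by
      by_contra hc
      push_neg at hc
      exact hne (funext hc)
    set n := Nat.find hex with hn
    have hσn : σ n ≠ τ n := Nat.find_spec hex
    have hbl : ∀ m : ℕ, m ≤ n → branchList σ m = branchList τ m := by
      intro m hm
      induction m with
      | zero => rfl
      | succ m ih =>
        have h1 : σ m = τ m := not_not.1 (Nat.find_min hex (Nat.lt_of_succ_le hm))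
        show σ m :: branchList σ m = τ m :: branchList τ m
        rw [h1, ih (Nat.le_of_succ_le hm)]
    obtain ⟨ψ, hψt, hψf⟩ := hchild (branchList σ n)
    have hτ1 : (Pm τ) ⊨ E (t (τ n :: branchList σ n)) := by
      have h := hPn τ (n + 1)
      rw [show nd τ (n + 1) = t (τ n :: branchList τ n) from rfl,
        ← hbl n le_rfl] at h
      exact h
    have hσq : Formula.equivSentence
        (BoundedFormula.constantsVarsEquiv.symm (θN (σ n :: branchList σ n))) ∈ qf σ :=
      (hqf σ (σ n :: branchList σ n)).2 (hPn σ (n + 1))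
    rw [hστ] at hσq
    have hτ2 : (Pm τ) ⊨ E (t (σ n :: branchList σ n)) :=
      (hqf τ (σ n :: branchList σ n)).1 hσq
    letI i1 : (L[[γ]]).Structure (Pm τ) := ((L[[γ]]).lhomWithConstants Unit).reduct (Pm τ)
    letI i0 : L.Structure (Pm τ) := (L.lhomWithConstants γ).reduct (Pm τ)
    have h3 := (realizeE_aux (Pm τ) (t (σ n :: branchList σ n))).1 hτ2
    have h4 := (realizeE_aux (Pm τ) (t (τ n :: branchList σ n))).1 hτ1
    cases hσv : σ n <;> cases hτv : τ n
    · exact hσn (hσv.trans hτv.symm)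
    · rw [hσv] at h3
      rw [hτv] at h4
      rw [hψf] at h3
      rw [hψt] at h4
      rw [Formula.realize_inf] at h3 h4
      rw [Formula.realize_not] at h3
      exact h3.2 h4.2
    · rw [hσv] at h3
      rw [hτv] at h4
      rw [hψt] at h3
      rw [hψf] at h4
      rw [Formula.realize_inf] at h3 h4
      rw [Formula.realize_not] at h4
      exact h4.2 h3.2
    · exact hσn (hσv.trans hτv.symm)
  -- contradiction with stability in `ℵ₀`
  haveI hNne : Nonempty ↥N :=
    Cardinal.mk_ne_zero_iff.1 (by rw [hNcard]; exact aleph0_ne_zero)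
  have hfin := h0 (Theory.ModelType.of T ↥N) hNcard
  have hinj2 : Cardinal.lift.{u} #(ℕ → Bool) ≤
      Cardinal.lift.{0} #((L.elementaryDiagram ↥N).CompleteType Unit) :=
    Cardinal.lift_mk_le'.2 ⟨⟨qf, hqinj⟩⟩
  rw [Cardinal.lift_uzero] at hinj2
  have hpow : (ℵ₀ : Cardinal.{0}) < #(ℕ → Bool) := by
    have h : #(ℕ → Bool) = 2 ^ ℵ₀ := by
      rw [← Cardinal.power_def, mk_bool, mk_nat]
    rw [h]
    exact Cardinal.cantor ℵ₀
  have hpow2 : (ℵ₀ : Cardinal.{u}) < Cardinal.lift.{u} #(ℕ → Bool) := by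
    rw [← lift_aleph0.{u, 0}]
    exact Cardinal.lift_lt.2 hpow
  exact lt_irrefl _ (hpow2.trans_le (hinj2.trans hfin))

end AuxiliaryLemmas

/-- If a complete theory `T` in a countable language is stable in every infinite `μ < κ`,
where `cf(κ) > ℵ₀`, then `T` is stable in `κ`. -/
theorem stable_at_uncountable_cofinality (T : L.Theory) (hT : T.IsComplete)
    (hInf : ∃ M : Theory.ModelType.{u, u, u} T, Infinite M)
    (hL : L.card ≤ ℵ₀)
    (κ : Cardinal.{u}) (hκ : ℵ₀ ≤ κ) (hcf : ℵ₀ < κ.ord.cof)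
    (hstab : ∀ μ : Cardinal.{u}, ℵ₀ ≤ μ → μ < κ → IsStableIn L T μ) :
    IsStableIn L T κ := by
  have hκ1 : ℵ₀ < κ := lt_of_lt_of_le hcf (Ordinal.cof_ord_le κ)
  have h0 : IsStableIn L T ℵ₀ := hstab ℵ₀ le_rfl hκ1
  intro Mo hMo
  exact key T κ hκ1 hL h0 ↥Mo hMo

end StabilityTransfer
end

section
/- Let L be a countable first-order language and T a complete L-theory with infinite models. If T is stable in ℵ₀, then T is stable in every infinite cardinal. -/
universe u

open Cardinal FirstOrder FirstOrder.Language

namespace StabilityTransfer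

set_option linter.unusedSectionVars false
set_option maxHeartbeats 1000000

section Counting

variable {L : FirstOrder.Language.{u, u}} {T : L.Theory} {α : Type}

/-- A model of a complete type. -/
noncomputable def someModel (p : T.CompleteType α) : p.toTheory.ModelType :=
  p.isMaximal.1.some

theorem mem_iff_realize_s4 (p : T.CompleteType α) (φ : (L[[α]]).Sentence) :
    φ ∈ p ↔ someModel p ⊨ φ := by
  rw [← SetLike.mem_coe, p.isMaximal.mem_iff_models φ]
  exact (p.isMaximal.isComplete.realize_sentence_iff φ (someModel p)).symm

theorem mem_inf_iff (p : T.CompleteType α) (φ ψ : (L[[α]]).Sentence) :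
    φ ⊓ ψ ∈ p ↔ φ ∈ p ∧ ψ ∈ p := by
  simp only [mem_iff_realize_s4 p]
  exact Formula.realize_inf

theorem top_mem (p : T.CompleteType α) : (⊤ : (L[[α]]).Sentence) ∈ p := by
  rw [mem_iff_realize_s4 p]
  exact Formula.realize_top.2 trivial

theorem completeType_eq_of_le {p q : T.CompleteType α} (h : ∀ ψ, ψ ∈ p → ψ ∈ q) : p = q :=
  SetLike.ext fun ψ =>
    ⟨h ψ, fun hq => (p.mem_or_not_mem ψ).resolve_right fun hnp =>
      (q.not_mem_iff ψ).1 (h _ hnp) hq⟩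

theorem exists_mem_not_mem {p q : T.CompleteType α} (h : p ≠ q) :
    ∃ ψ, ψ ∈ p ∧ ψ ∉ q := by
  by_contra hc
  push_neg at hc
  exact h (completeType_eq_of_le hc)

theorem exists_split {lam : Cardinal.{u}} (hlam : ℵ₀ ≤ lam)
    (hS : #((L[[α]]).Sentence) ≤ lam) (φ : (L[[α]]).Sentence)
    (hφ : lam < #{p : T.CompleteType α | φ ∈ p}) :
    ∃ ψ, lam < #{p : T.CompleteType α | φ ⊓ ψ ∈ p} ∧
      lam < #{p : T.CompleteType α | φ ⊓ ψ.not ∈ p} := by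
  by_contra hcon
  push_neg at hcon
  set F : (L[[α]]).Sentence → Set (T.CompleteType α) := fun ψ =>
    if lam < #{p : T.CompleteType α | φ ⊓ ψ ∈ p} then ∅ else {p | φ ⊓ ψ ∈ p} with hF
  have hFcard : ∀ ψ, #(F ψ) ≤ lam := by
    intro ψ
    rw [hF]
    dsimp only
    split_ifs with h
    · simp
    · exact not_lt.1 h
  set B : Set (T.CompleteType α) := {p | φ ∈ p} \ ⋃ ψ, F ψ with hB
  have hBsub : B.Subsingleton := by
    intro p hp q hq
    by_contra hne
    obtain ⟨ψ, hψp, hψq⟩ := exists_mem_not_mem hne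
    have hψnq : ψ.not ∈ q := (q.mem_or_not_mem ψ).resolve_left hψq
    by_cases h : lam < #{p : T.CompleteType α | φ ⊓ ψ ∈ p}
    · have h2 := hcon ψ h
      have hqF : q ∈ F ψ.not := by
        rw [hF]
        dsimp only
        rw [if_neg (not_lt.2 h2)]
        exact (mem_inf_iff q φ ψ.not).2 ⟨hq.1, hψnq⟩
      exact hq.2 (Set.mem_iUnion.2 ⟨ψ.not, hqF⟩)
    · have hpF : p ∈ F ψ := by
        rw [hF]
        dsimp only
        rw [if_neg h]
        exact (mem_inf_iff p φ ψ).2 ⟨hp.1, hψp⟩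
      exact hp.2 (Set.mem_iUnion.2 ⟨ψ, hpF⟩)
  have hsub : {p : T.CompleteType α | φ ∈ p} ⊆ B ∪ ⋃ ψ, F ψ := by
    intro p hp
    by_cases h : p ∈ ⋃ ψ, F ψ
    · exact Or.inr h
    · exact Or.inl ⟨hp, h⟩
  have hcount : #{p : T.CompleteType α | φ ∈ p} ≤ lam := by
    haveI : Nonempty ((L[[α]]).Sentence) := ⟨⊥⟩
    calc #{p : T.CompleteType α | φ ∈ p} ≤ #(B ∪ ⋃ ψ, F ψ : Set (T.CompleteType α)) :=
          mk_le_mk_of_subset hsub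
      _ ≤ #B + #(⋃ ψ, F ψ : Set (T.CompleteType α)) := mk_union_le _ _
      _ ≤ 1 + #((L[[α]]).Sentence) * ⨆ ψ, #(F ψ) :=
          add_le_add (mk_le_one_iff_set_subsingleton.2 hBsub) (mk_iUnion_le _)
      _ ≤ 1 + lam * lam := add_le_add le_rfl (mul_le_mul' hS (ciSup_le' hFcard))
      _ = lam := by rw [mul_eq_self hlam, add_eq_right hlam (one_le_aleph0.trans hlam)]
  exact absurd hφ (not_lt.2 hcount)

end Counting

/-- The path of length `n` along a branch `σ`, as a list (most recent first). -/
def pathList (σ : ℕ → Bool) : ℕ → List Bool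
  | 0 => []
  | n + 1 => σ n :: pathList σ n

theorem pathList_congr {σ σ' : ℕ → Bool} : ∀ {n : ℕ}, (∀ k < n, σ k = σ' k) →
    pathList σ n = pathList σ' n
  | 0, _ => rfl
  | n + 1, h => by
    rw [pathList, pathList, h n (Nat.lt_succ_self n),
      pathList_congr fun k hk => h k (hk.trans (Nat.lt_succ_self n))]

section Tree

variable {L : FirstOrder.Language.{u, u}} {T : L.Theory} {α : Type}

theorem exists_tree {lam : Cardinal.{u}} (hlam : ℵ₀ ≤ lam)
    (hS : #((L[[α]]).Sentence) ≤ lam) (hbig : lam < #(T.CompleteType α)) :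
    ∃ (node wit : List Bool → (L[[α]]).Sentence) (p : (ℕ → Bool) → T.CompleteType α),
      (∀ s b, node (b :: s) = node s ⊓ (if b then wit s else (wit s).not)) ∧
      (∀ σ n, node (pathList σ n) ∈ p σ) := by
  -- choose splitting witnesses
  have key : ∀ φ : (L[[α]]).Sentence, ∃ ψ, lam < #{p : T.CompleteType α | φ ∈ p} →
      lam < #{p : T.CompleteType α | φ ⊓ ψ ∈ p} ∧
        lam < #{p : T.CompleteType α | φ ⊓ ψ.not ∈ p} := by
    intro φ
    by_cases h : lam < #{p : T.CompleteType α | φ ∈ p}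
    · exact (exists_split hlam hS φ h).imp fun ψ hψ _ => hψ
    · exact ⟨⊥, fun h' => absurd h' h⟩
  choose nxt hnxt using key
  -- the tree of sentences
  set node : List Bool → (L[[α]]).Sentence := fun s =>
    s.foldr (fun b acc => acc ⊓ (if b then nxt acc else (nxt acc).not)) ⊤ with hnode
  have hnode_cons : ∀ s b, node (b :: s) = node s ⊓
      (if b then nxt (node s) else (nxt (node s)).not) := by
    intro s b
    rw [hnode]
    simp only [List.foldr_cons]
  have node_big : ∀ s, lam < #{p : T.CompleteType α | node s ∈ p} := by
    intro s
    induction s with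
    | nil =>
        have : {p : T.CompleteType α | node [] ∈ p} = Set.univ :=
          Set.eq_univ_of_forall fun p => top_mem p
        rw [this, mk_univ]
        exact hbig
    | cons b s ih =>
        rcases hnxt (node s) ih with ⟨h1, h2⟩
        rw [hnode_cons s b]
        cases b
        · simpa using h2
        · simpa using h1
  -- each branch is contained in a complete type
  have branch : ∀ σ : ℕ → Bool, ∃ p : T.CompleteType α,
      ∀ n, node (pathList σ n) ∈ p := by
    intro σ
    -- node of a longer path implies node of a shorter one
    have desc : ∀ (p : T.CompleteType α) (m k : ℕ), k ≤ m →
        node (pathList σ m) ∈ p → node (pathList σ k) ∈ p := by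
      intro p m
      induction m with
      | zero => intro k hk h; rw [Nat.le_zero.1 hk]; exact h
      | succ m ih =>
          intro k hk h
          have hm : node (pathList σ m) ∈ p := by
            have := (mem_inf_iff p _ _).1 (by rw [← hnode_cons]; exact h)
            exact this.1
          rcases Nat.lt_succ_iff_lt_or_eq.1 (Nat.lt_succ_of_le hk) with h' | h'
          · exact ih k (Nat.lt_succ_iff.1 h') hm
          · rw [h']; exact h
    have hsat : ((L.lhomWithConstants α).onTheory T ∪
        Set.range fun n => node (pathList σ n)).IsSatisfiable := by
      have hU : ((L.lhomWithConstants α).onTheory T ∪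
          Set.range fun n => node (pathList σ n)) =
          ⋃ n : ℕ, ((L.lhomWithConstants α).onTheory T ∪
            {φ | ∃ k ≤ n, φ = node (pathList σ k)}) := by
        ext χ
        simp only [Set.mem_union, Set.mem_iUnion, Set.mem_range, Set.mem_setOf_eq]
        constructor
        · rintro (h | ⟨n, rfl⟩)
          · exact ⟨0, Or.inl h⟩
          · exact ⟨n, Or.inr ⟨n, le_rfl, rfl⟩⟩
        · rintro ⟨n, h | ⟨k, _, rfl⟩⟩
          · exact Or.inl h
          · exact Or.inr ⟨k, rfl⟩
      rw [hU]
      rw [Theory.isSatisfiable_directed_union_iff]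
      · intro n
        -- a complete type containing node (pathList σ n)
        have hne : {p : T.CompleteType α | node (pathList σ n) ∈ p}.Nonempty := by
          rw [← Set.nonempty_coe_sort, ← mk_ne_zero_iff]
          intro h
          have := node_big (pathList σ n)
          rw [h] at this
          exact not_lt_of_ge (zero_le : (0 : Cardinal) ≤ lam) this
        obtain ⟨p, hp⟩ := hne
        refine (p.isMaximal.1).mono ?_
        rintro χ (h | h)
        · exact p.subset h
        · obtain ⟨k, hk, rfl⟩ := h
          exact desc p n k hk hp
      · intro m n
        exact ⟨max m n, Set.union_subset_union_right _ (fun φ ⟨k, hk, h⟩ =>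
            ⟨k, hk.trans (le_max_left m n), h⟩),
          Set.union_subset_union_right _ (fun φ ⟨k, hk, h⟩ =>
            ⟨k, hk.trans (le_max_right m n), h⟩)⟩
    have : {p : T.CompleteType α |
        (Set.range fun n => node (pathList σ n)) ⊆ ↑p}.Nonempty := by
      rw [Set.nonempty_iff_ne_empty]
      intro h
      exact (Theory.CompleteType.setOf_subset_eq_empty_iff _).1 h hsat
    obtain ⟨p, hp⟩ := this
    exact ⟨p, fun n => hp (Set.mem_range_self n)⟩
  choose p hp using branch
  exact ⟨node, fun s => nxt (node s), p, hnode_cons, hp⟩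

end Tree

section Restrict

variable {L : FirstOrder.Language.{u, u}} {M : Type u} [L.Structure M] [Nonempty M]
variable (S : L.ElementarySubstructure M)

/-- A sentence over `(M, Unit)` as an `L`-formula with free variables in `M ⊕ Unit`. -/
def formOf (φ : ((L[[M]])[[Unit]]).Sentence) : L.Formula (M ⊕ Unit) :=
  BoundedFormula.constantsVarsEquiv (Formula.equivSentence.symm φ)

/-- The set of parameters occurring in a sentence over `(M, Unit)`. -/
noncomputable def suppOf (φ : ((L[[M]])[[Unit]]).Sentence) : Set M :=
  letI : DecidableEq (M ⊕ Unit) := Classical.decEq _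
  {m | Sum.inl m ∈ (formOf φ).freeVarFinset}

theorem suppOf_finite (φ : ((L[[M]])[[Unit]]).Sentence) : (suppOf φ).Finite := by
  letI : DecidableEq (M ⊕ Unit) := Classical.decEq _
  exact Set.Finite.preimage (Set.injOn_of_injective Sum.inl_injective)
    (formOf φ).freeVarFinset.finite_toSet

noncomputable def toS : M → S := fun m =>
  letI : Decidable (m ∈ S) := Classical.dec _
  if h : m ∈ S then ⟨m, h⟩ else Classical.arbitrary S

/-- Restriction of a sentence with parameters in `S` to a sentence over `(S, Unit)`. -/
noncomputable def restrictSent (φ : ((L[[M]])[[Unit]]).Sentence) : ((L[[S]])[[Unit]]).Sentence :=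
  Formula.equivSentence
    (BoundedFormula.constantsVarsEquiv.symm (Formula.relabel (Sum.map (toS S) id) (formOf φ)))

/-- The language map from `(L[[S]])[[Unit]]` to `(L[[M]])[[Unit]]`. -/
def ΦS : (L[[S]])[[Unit]] →ᴸ (L[[M]])[[Unit]] :=
  LHom.addConstants Unit (L.lhomWithConstantsMap ((↑) : S → M))

theorem phi_comp : (ΦS S).comp ((L[[(S : Type u)]]).lhomWithConstants Unit) =
    ((L[[M]]).lhomWithConstants Unit).comp (L.lhomWithConstantsMap ((↑) : S → M)) := by
  apply LHom.funext
  · funext n f; rfl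
  · funext n R; rfl

theorem onSentence_comp' {L1 L2 L3 : FirstOrder.Language} (g : L2 →ᴸ L3) (f : L1 →ᴸ L2)
    (χ : L1.Sentence) : (g.comp f).onSentence χ = g.onSentence (f.onSentence χ) := by
  show (g.comp f).onBoundedFormula χ = g.onBoundedFormula (f.onBoundedFormula χ)
  rw [LHom.comp_onBoundedFormula]
  rfl

theorem onSentence_not {L1 L2 : FirstOrder.Language} (g : L1 →ᴸ L2) (χ : L1.Sentence) :
    g.onSentence χ.not = (g.onSentence χ).not := rfl

/-- Realization only depends on the free variables. -/
theorem realize_congr_valuation {X : Type*} [L.Structure X] {β : Type*} (φ : L.Formula β)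
    {v w : β → X}
    (h : ∀ b, (letI : DecidableEq β := Classical.decEq _; b ∈ φ.freeVarFinset) → v b = w b) :
    φ.Realize v ↔ φ.Realize w := by
  letI : DecidableEq β := Classical.decEq _
  have hsub : ↑φ.freeVarFinset ⊆ (↑φ.freeVarFinset : Set β) := subset_rfl
  have hvw : v ∘ ((↑) : (↑φ.freeVarFinset : Set β) → β) = w ∘ (↑) := by
    funext b
    exact h b b.2
  show BoundedFormula.Realize φ v default ↔ BoundedFormula.Realize φ w default
  rw [← BoundedFormula.realize_restrictFreeVar' hsub (v := v),
    ← BoundedFormula.realize_restrictFreeVar' hsub (v := w), hvw]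

theorem diag_transfer (χ : (L[[(S : Type u)]]).Sentence) :
    (L.lhomWithConstantsMap ((↑) : S → M)).onSentence χ ∈ L.elementaryDiagram M ↔
      χ ∈ L.elementaryDiagram S := by
  letI : (constantsOn (S : Type u)).Structure M := constantsOn.structure ((↑) : S → M)
  haveI : (LHom.constantsOnMap ((↑) : S → M)).IsExpansionOn M :=
    constantsOnMap_isExpansionOn rfl
  haveI : (L.lhomWithConstantsMap ((↑) : S → M)).IsExpansionOn M :=
    LHom.sumMap_isExpansionOn _ _ _
  show _ ∈ (L[[M]]).completeTheory M ↔ _ ∈ (L[[(S : Type u)]]).completeTheory S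
  rw [mem_completeTheory, mem_completeTheory, LHom.realize_onSentence]
  -- now : M ⊨ χ ↔ S ⊨ χ
  have h1 : (S : Type u) ⊨ χ ↔ (BoundedFormula.constantsVarsEquiv χ).Realize
      (Sum.elim (fun (a : (S : Type u)) => ((L.con a : S))) (default : Empty → S)) default :=
    (BoundedFormula.realize_constantsVarsEquiv).symm
  have h2 : M ⊨ χ ↔ (BoundedFormula.constantsVarsEquiv χ).Realize
      (Sum.elim (fun (a : (S : Type u)) => ((L.con a : M))) (default : Empty → M)) default :=
    (BoundedFormula.realize_constantsVarsEquiv).symm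
  have hval : (⇑S.subtype ∘ Sum.elim (fun (a : (S : Type u)) => ((L.con a : S))) (default : Empty → S)) =
      Sum.elim (fun (a : (S : Type u)) => ((L.con a : M))) (default : Empty → M) := by
    funext x
    rcases x with a | e
    · rfl
    · exact e.elim
  have hcomp : Formula.Realize (BoundedFormula.constantsVarsEquiv χ)
      (⇑S.subtype ∘ Sum.elim (fun (a : (S : Type u)) => ((L.con a : S))) (default : Empty → S)) ↔
      Formula.Realize (BoundedFormula.constantsVarsEquiv χ)
      (Sum.elim (fun (a : (S : Type u)) => ((L.con a : M))) (default : Empty → M)) := by rw [hval]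
  exact h2.trans (hcomp.symm.trans ((S.subtype.map_formula _ _).trans h1.symm))

end Restrict

section Restrict2
variable {L : FirstOrder.Language.{u, u}} {M : Type u} [L.Structure M] [Nonempty M]
variable (S : L.ElementarySubstructure M)

theorem realize_phi_restrict (X : Type u) [inst : ((L[[M]])[[Unit]]).Structure X]
    [Nonempty X] (φ : ((L[[M]])[[Unit]]).Sentence) (hsupp : suppOf φ ⊆ (S : Set M)) :
    X ⊨ (ΦS S).onSentence (restrictSent S φ) ↔ X ⊨ φ := by
  letI iS2 : ((L[[(S : Type u)]])[[Unit]]).Structure X := (ΦS S).reduct X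
  letI iS1 : (L[[(S : Type u)]]).Structure X :=
    ((L[[(S : Type u)]]).lhomWithConstants Unit).reduct X
  letI iS0 : L.Structure X := (L.lhomWithConstants (S : Type u)).reduct X
  letI iM1 : (L[[M]]).Structure X := ((L[[M]]).lhomWithConstants Unit).reduct X
  haveI e2 : (ΦS S).IsExpansionOn X := LHom.isExpansionOn_reduct _ _
  haveI e1 : ((L[[(S : Type u)]]).lhomWithConstants Unit).IsExpansionOn X :=
    LHom.isExpansionOn_reduct _ _
  haveI e0 : (L.lhomWithConstants (S : Type u)).IsExpansionOn X :=
    LHom.isExpansionOn_reduct _ _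
  haveI eM1 : ((L[[M]]).lhomWithConstants Unit).IsExpansionOn X :=
    LHom.isExpansionOn_reduct _ _
  haveI eM0 : (L.lhomWithConstants M).IsExpansionOn X :=
    LHom.isExpansionOn_reduct _ _
  have hA : X ⊨ (ΦS S).onSentence (restrictSent S φ) ↔ X ⊨ restrictSent S φ :=
    LHom.realize_onSentence _ _ _
  have hB : X ⊨ restrictSent S φ ↔
      (Formula.Realize (BoundedFormula.constantsVarsEquiv.symm
        (Formula.relabel (Sum.map (toS S) id) (formOf φ)))
        (fun y : Unit => (((L[[(S : Type u)]]).con y : X)))) :=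
    Formula.realize_equivSentence _ _
  have hC : (Formula.Realize (BoundedFormula.constantsVarsEquiv.symm
        (Formula.relabel (Sum.map (toS S) id) (formOf φ)))
        (fun y : Unit => (((L[[(S : Type u)]]).con y : X)))) ↔
      (Formula.Realize (Formula.relabel (Sum.map (toS S) id) (formOf φ))
        (Sum.elim (fun a : (S : Type u) => ((L.con a : X)))
          (fun y : Unit => (((L[[(S : Type u)]]).con y : X))))) := by
    have := BoundedFormula.realize_constantsVarsEquiv (M := X)
      (φ := BoundedFormula.constantsVarsEquiv.symm
        (Formula.relabel (Sum.map (toS S) id) (formOf φ)))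
      (v := fun y : Unit => (((L[[(S : Type u)]]).con y : X))) (xs := default)
    rw [Equiv.apply_symm_apply] at this
    exact this.symm
  have hD : (Formula.Realize (Formula.relabel (Sum.map (toS S) id) (formOf φ))
        (Sum.elim (fun a : (S : Type u) => ((L.con a : X)))
          (fun y : Unit => (((L[[(S : Type u)]]).con y : X))))) ↔
      (Formula.Realize (formOf φ)
        ((Sum.elim (fun a : (S : Type u) => ((L.con a : X)))
          (fun y : Unit => (((L[[(S : Type u)]]).con y : X)))) ∘ Sum.map (toS S) id)) :=
    Formula.realize_relabel
  have hE : X ⊨ φ ↔ (Formula.Realize (Formula.equivSentence.symm φ)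
      (fun y : Unit => (((L[[M]]).con y : X)))) :=
    (Formula.realize_equivSentence_symm_con X φ).symm
  have hF : (Formula.Realize (Formula.equivSentence.symm φ)
        (fun y : Unit => (((L[[M]]).con y : X)))) ↔
      (Formula.Realize (formOf φ)
        (Sum.elim (fun m : M => ((L.con m : X)))
          (fun y : Unit => (((L[[M]]).con y : X))))) := by
    exact (BoundedFormula.realize_constantsVarsEquiv (M := X)
      (φ := Formula.equivSentence.symm φ)
      (v := fun y : Unit => (((L[[M]]).con y : X))) (xs := default)).symm
  have hG : (Formula.Realize (formOf φ)
        ((Sum.elim (fun a : (S : Type u) => ((L.con a : X)))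
          (fun y : Unit => (((L[[(S : Type u)]]).con y : X)))) ∘ Sum.map (toS S) id)) ↔
      (Formula.Realize (formOf φ)
        (Sum.elim (fun m : M => ((L.con m : X)))
          (fun y : Unit => (((L[[M]]).con y : X))))) := by
    apply realize_congr_valuation
    intro b hb
    rcases b with m | y
    · have hm : m ∈ S := hsupp hb
      have ht : toS S m = ⟨m, hm⟩ := dif_pos hm
      show (Sum.elim _ _) (Sum.map (toS S) id (Sum.inl m)) = _
      rw [Sum.map_inl, ht]
      rfl
    · rfl
  rw [hA, hB, hC, hD, hG, ← hF, ← hE]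

end Restrict2

section Restrict3

variable {L : FirstOrder.Language.{u, u}} {M : Type u} [L.Structure M] [Nonempty M]
variable (S : L.ElementarySubstructure M)

/-- The restriction of a complete type over `M` to a complete type over `S`. -/
noncomputable def restrictType (p : (L.elementaryDiagram M).CompleteType Unit) :
    (L.elementaryDiagram (S : Type u)).CompleteType Unit where
  toTheory := (ΦS S).onSentence ⁻¹' p.toTheory
  subset' := by
    rintro χ' ⟨χ₀, hχ₀, rfl⟩
    show (ΦS S).onSentence (((L[[(S : Type u)]]).lhomWithConstants Unit).onSentence χ₀) ∈
      p.toTheory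
    rw [← onSentence_comp', phi_comp, onSentence_comp']
    exact p.subset ⟨_, (diag_transfer S χ₀).2 hχ₀, rfl⟩
  isMaximal' := by
    constructor
    · letI X := someModel p
      letI : ((L[[(S : Type u)]])[[Unit]]).Structure X := (ΦS S).reduct X
      haveI e2 : (ΦS S).IsExpansionOn (X : Type u) := LHom.isExpansionOn_reduct _ _
      haveI : (X : Type u) ⊨ ((ΦS S).onSentence ⁻¹' p.toTheory : _root_.Set _) := by
        constructor
        intro χ hχ
        exact (LHom.realize_onSentence _ _ _).1 (p.toTheory.realize_sentence_of_mem hχ)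
      exact ⟨Theory.ModelType.of _ X⟩
    · intro χ
      rcases p.mem_or_not_mem ((ΦS S).onSentence χ) with h | h
      · exact Or.inl h
      · right
        show (ΦS S).onSentence χ.not ∈ p.toTheory
        rw [onSentence_not]
        exact h

theorem mem_restrictType (p : (L.elementaryDiagram M).CompleteType Unit)
    (ψ : ((L[[(S : Type u)]])[[Unit]]).Sentence) :
    ψ ∈ restrictType S p ↔ (ΦS S).onSentence ψ ∈ p :=
  Iff.rfl

end Restrict3



variable (L : FirstOrder.Language.{u, u})

/-- If a complete theory in a countable language is stable in ℵ₀ then it is stable in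
every infinite cardinal. -/
theorem stable_everywhere_of_omegaStable (T : L.Theory) (hT : T.IsComplete)
    (hInf : ∃ M : Theory.ModelType.{u, u, u} T, Infinite M)
    (hL : L.card ≤ ℵ₀)
    (hstab : IsStableIn L T ℵ₀) :
    ∀ lam : Cardinal.{u}, ℵ₀ ≤ lam → IsStableIn L T lam := by
  intro lam hlam M hM
  by_contra hbig'
  push_neg at hbig'
  have hbig : lam < #(typesOver L M) := hbig'
  -- cardinality of sentences over M
  have hS : #(((L[[(M : Type u)]])[[Unit]]).Sentence) ≤ lam := by
    have h1 : #(((L[[(M : Type u)]])[[Unit]]).Sentence) ≤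
        #(Σ n, ((L[[(M : Type u)]])[[Unit]]).BoundedFormula Empty n) :=
      Cardinal.mk_le_of_injective (f := Sigma.mk 0) sigma_mk_injective
    have h2 := BoundedFormula.card_le (L := (L[[(M : Type u)]])[[Unit]]) (α := Empty)
    simp only [Cardinal.mk_empty, Cardinal.lift_zero, zero_add, Cardinal.lift_uzero] at h2
    have hcard : ((L[[(M : Type u)]])[[Unit]]).card ≤ lam := by
      rw [card_withConstants, card_withConstants]
      simp only [Cardinal.lift_add, Cardinal.lift_id, Cardinal.lift_uzero,
        Cardinal.mk_fintype, Fintype.card_unit, Nat.cast_one]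
      have hb : L.card + #(M : Type u) + 1 ≤ lam + lam + lam :=
        add_le_add (add_le_add (hL.trans hlam) hM.le) (one_le_aleph0.trans hlam)
      refine le_trans ?_ (hb.trans ?_)
      · rw [Cardinal.lift_one]
      · rw [Cardinal.add_eq_self hlam, Cardinal.add_eq_self hlam]
    exact h1.trans (h2.trans (max_le hlam hcard))
  -- the binary tree and branch types
  obtain ⟨node, wit, p, hcons, hmem⟩ :=
    exists_tree (T := L.elementaryDiagram M) (α := Unit) hlam hS hbig
  -- witnesses along branches
  have hwit : ∀ (σ : ℕ → Bool) (n : ℕ),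
      (if σ n then wit (pathList σ n) else (wit (pathList σ n)).not) ∈ p σ := by
    intro σ n
    have h1 : node (pathList σ (n + 1)) ∈ p σ := hmem σ (n + 1)
    have h2 : node (pathList σ (n + 1)) =
        node (pathList σ n) ⊓ (if σ n then wit (pathList σ n) else (wit (pathList σ n)).not) :=
      hcons (pathList σ n) (σ n)
    rw [h2] at h1
    exact ((mem_inf_iff _ _ _).1 h1).2
  -- countable parameter set
  set A : _root_.Set (M : Type u) := ⋃ s : List Bool, suppOf (wit s) with hA
  have hAcount : A.Countable := Set.countable_iUnion fun s => (suppOf_finite (wit s)).countable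
  -- countable elementary submodel containing A
  obtain ⟨S, hAS, hScard⟩ := exists_elementarySubstructure_card_eq L A (ℵ₀ : Cardinal.{u})
    le_rfl (by simpa using hAcount.le_aleph0) (by simpa using hL)
    (by simpa [hM] using hlam)
  rw [Cardinal.lift_id, Cardinal.lift_id] at hScard
  -- membership transfer between p σ and restricted types
  have hsuppw : ∀ s : List Bool, suppOf (wit s) ⊆ (S : _root_.Set (M : Type u)) := fun s =>
    (Set.subset_iUnion (fun s : List Bool => suppOf (wit s)) s).trans hAS
  have key : ∀ (pp : (L.elementaryDiagram (M : Type u)).CompleteType Unit) (s : List Bool),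
      ((ΦS S).onSentence (restrictSent S (wit s)) ∈ pp ↔ wit s ∈ pp) := by
    intro pp s
    rw [mem_iff_realize_s4 pp, mem_iff_realize_s4 pp]
    exact realize_phi_restrict S (someModel pp) (wit s) (hsuppw s)
  have keyn : ∀ (pp : (L.elementaryDiagram (M : Type u)).CompleteType Unit) (s : List Bool),
      ((ΦS S).onSentence (restrictSent S (wit s)).not ∈ pp ↔ (wit s).not ∈ pp) := by
    intro pp s
    rw [onSentence_not, mem_iff_realize_s4 pp, mem_iff_realize_s4 pp,
      Sentence.realize_not, Sentence.realize_not]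
    rw [realize_phi_restrict S (someModel pp) (wit s) (hsuppw s)]
  -- injectivity of restriction along branches
  have hinj : Function.Injective
      (fun σ : ℕ → Bool => restrictType S (p σ)) := by
    intro σ σ' h
    have hq : restrictType S (p σ) = restrictType S (p σ') := h
    by_contra hne
    have hex : ∃ n, σ n ≠ σ' n := Function.ne_iff.1 hne
    set n := Nat.find hex with hn
    have hnn : σ n ≠ σ' n := Nat.find_spec hex
    have hagree : ∀ k < n, σ k = σ' k := fun k hk => by
      by_contra h'
      exact Nat.find_min hex hk h'
    have hpath : pathList σ n = pathList σ' n := pathList_congr hagree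
    set s := pathList σ n with hs
    set r := restrictSent S (wit s) with hr
    have hrq : ∀ b : Bool, (if b then r ∈ restrictType S (p σ) else r.not ∈ restrictType S (p σ)) →
        (if b then r.not ∈ restrictType S (p σ') else r ∈ restrictType S (p σ')) → False := by
      intro b h1 h2
      cases b
      · simp only [if_neg Bool.false_ne_true] at h1 h2
        rw [hq] at h1
        exact ((restrictType S (p σ')).not_mem_iff r).1 h1 h2
      · simp only [if_pos] at h1 h2
        rw [hq] at h1
        exact ((restrictType S (p σ')).not_mem_iff r).1 h2 h1
    cases hb : σ n
    · have hb' : σ' n = true := by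
        cases hb2 : σ' n
        · rw [hb, hb2] at hnn; exact absurd rfl hnn
        · rfl
      refine hrq false ?_ ?_
      · simp only [if_neg Bool.false_ne_true]
        have := hwit σ n
        rw [hb] at this
        simp only [if_neg Bool.false_ne_true] at this
        rw [mem_restrictType, hr]
        exact (keyn (p σ) s).2 this
      · simp only [if_neg Bool.false_ne_true]
        have := hwit σ' n
        rw [hb'] at this
        simp only [if_pos] at this
        rw [← hpath] at this
        rw [mem_restrictType, hr]
        exact (key (p σ') s).2 this
    · have hb' : σ' n = false := by
        cases hb2 : σ' n
        · rfl
        · rw [hb, hb2] at hnn; exact absurd rfl hnn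
      refine hrq true ?_ ?_
      · simp only [if_pos]
        have := hwit σ n
        rw [hb] at this
        simp only [if_pos] at this
        rw [mem_restrictType, hr]
        exact (key (p σ) s).2 this
      · simp only [if_pos]
        have := hwit σ' n
        rw [hb'] at this
        simp only [if_neg Bool.false_ne_true] at this
        rw [← hpath] at this
        rw [mem_restrictType, hr]
        exact (keyn (p σ') s).2 this
  -- the submodel is a countable model of T with too many types
  have hcount : #(typesOver L (S : Type u)) ≤ ℵ₀ := by
    have := hstab (Theory.ModelType.of T (S : Type u)) hScard
    exact this
  have hle : Cardinal.lift.{u} #(ℕ → Bool) ≤ #(typesOver L (S : Type u)) := by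
    rw [← Cardinal.mk_uLift]
    exact Cardinal.mk_le_of_injective (f := fun σ : ULift.{u} (ℕ → Bool) =>
      restrictType S (p σ.down)) fun σ σ' hh => ULift.ext _ _ (hinj hh)
  have h2n : (2 : Cardinal.{0}) ^ (ℵ₀ : Cardinal.{0}) = #(ℕ → Bool) := by
    rw [← Cardinal.mk_bool, ← Cardinal.mk_denumerable ℕ, Cardinal.power_def]
  have : Cardinal.lift.{u} ((2 : Cardinal.{0}) ^ (ℵ₀ : Cardinal.{0})) ≤ ℵ₀ := by
    rw [h2n]
    exact hle.trans hcount
  rw [Cardinal.lift_power, Cardinal.lift_aleph0, Cardinal.lift_two] at this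
  exact absurd this (not_le.2 (Cardinal.cantor ℵ₀))

end StabilityTransfer
end

section
/- Let L be a first-order language and T a complete L-theory with infinite models, and let μ be an infinite cardinal with μ ≥ |L|. Let N ≼ M ≼ M' be models of T, all of cardinality μ, such that M is universal over N and M' is universal over M. If p ∈ S(M) does not split over N, then there exists a unique complete type p' ∈ S(M') such that p' extends p and p' does not split over N. -/
universe u

open Cardinal FirstOrder FirstOrder.Language

namespace StabilityTransfer

variable (L : FirstOrder.Language.{u, u})

/-- The formula `φ(x, ā)` with one free variable `x` obtained from the `L`-formula
`φ(x, ȳ)` by substituting the tuple `ā` of elements of `M` (as constants) for `ȳ`. -/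
noncomputable def withParams {M : Type u} [L.Structure M] {n : ℕ}
    (φ : L.Formula (Fin n ⊕ Unit)) (a : Fin n → M) : L[[M]].Formula Unit :=
  ((L.lhomWithConstants M).onFormula φ).subst
    (Sum.elim (fun i => ((L.con (a i)).term : L[[M]].Term Unit)) (fun u => Term.var u))

/-- Tuples `ā` and `b̄` from `M` realize the same complete type over the subset `A ⊆ M`:
they satisfy the same `L`-formulas with parameters from `A`. -/
def SameTypeOver {M : Type u} [L.Structure M] (A : Set M) {n : ℕ}
    (a b : Fin n → M) : Prop :=
  ∀ (m : ℕ) (c : Fin m → M), (∀ i, c i ∈ A) →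
    ∀ ψ : L.Formula (Fin m ⊕ Fin n),
      ψ.Realize (Sum.elim c a) ↔ ψ.Realize (Sum.elim c b)

/-- A complete 1-type `p ∈ S(M)` splits over a subset `A ⊆ M` if there are finite tuples
`ā`, `b̄` from `M` realizing the same complete type over `A` and an `L`-formula `φ(x, ȳ)`
with `φ(x, ā) ∈ p` and `¬φ(x, b̄) ∈ p`. -/
noncomputable def Splits {M : Type u} [L.Structure M]
    (p : typesOver L M) (A : Set M) : Prop :=
  ∃ (n : ℕ) (a b : Fin n → M) (φ : L.Formula (Fin n ⊕ Unit)),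
    SameTypeOver L A a b ∧
    Formula.equivSentence (withParams L φ a) ∈ p ∧
    Formula.equivSentence (Formula.not (withParams L φ b)) ∈ p

/-- The inclusion of an elementary substructure `M ≼ Mbig` induces a map on sentences
with constants from the respective model and one extra constant for the free variable;
`p' ∈ S(Mbig)` extends `p ∈ S(M)` if it contains the image of every sentence of `p`. -/
def ExtendsType {Mbig : Type u} [L.Structure Mbig] (M : L.ElementarySubstructure Mbig)
    (p : typesOver L (↥M)) (p' : typesOver L Mbig) : Prop :=
  ∀ ψ : (L[[↥M]])[[Unit]].Sentence, ψ ∈ p →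
    (((L.lhomWithConstantsMap ((↑) : ↥M → Mbig)).sumMap
        (LHom.id (constantsOn Unit))).onSentence ψ) ∈ p'

/-- `B` (a structure containing `A` via `incl`) is universal over `A` for models of `T`
of cardinality `μ`: every elementary extension of `A` of cardinality `μ` elementarily
embeds into `B` fixing `A` pointwise. -/
def UniversalOver (T : L.Theory) (A : Type u) [L.Structure A] (B : Type u)
    [L.Structure B] (incl : A → B) (μ : Cardinal.{u}) : Prop :=
  ∀ (A' : Theory.ModelType.{u, u, u} T) (g : A ↪ₑ[L] A'), #A' = μ →
    ∃ f : A' ↪ₑ[L] B, ∀ x : A, f (g x) = incl x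

/-! ### Auxiliary machinery -/

variable {L}

/-- The language map `L[[W']][[Unit]] →ᴸ L[[W]][[Unit]]` induced by a map of constants. -/
def consMap {W W' : Type u} (g : W' → W) : (L[[W']])[[Unit]] →ᴸ (L[[W]])[[Unit]] :=
  (L.lhomWithConstantsMap g).sumMap (LHom.id (constantsOn Unit))

theorem realize_withParamsSentence {W K : Type u} [L.Structure W]
    [str : (L[[W]])[[Unit]].Structure K] {n : ℕ}
    (φ : L.Formula (Fin n ⊕ Unit)) (a : Fin n → W) :
    letI strW : L[[W]].Structure K := ((L[[W]]).lhomWithConstants Unit).reduct K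
    letI strL : L.Structure K := (L.lhomWithConstants W).reduct K
    ((K ⊨ Formula.equivSentence (withParams L φ a)) ↔
      φ.Realize (Sum.elim (fun i => ((L.con (a i) : K))) (fun u => (((L[[W]]).con u : K))))) := by
  letI strW : L[[W]].Structure K := ((L[[W]]).lhomWithConstants Unit).reduct K
  letI strL : L.Structure K := (L.lhomWithConstants W).reduct K
  haveI hexp : (L.lhomWithConstants W).IsExpansionOn K := LHom.isExpansionOn_reduct _ K
  rw [@Formula.realize_equivSentence (L[[W]]) K strW Unit str
    (LHom.isExpansionOn_reduct _ K) (withParams L φ a)]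
  rw [withParams]
  simp only [Formula.Realize, BoundedFormula.realize_subst]
  have hv : (fun x => Term.realize (M := K) (fun u => ((L[[W]].con u : K)))
      (Sum.elim (fun i => ((L.con (a i)).term : L[[W]].Term Unit)) (fun u => Term.var u) x)) =
      Sum.elim (fun i => ((L.con (a i) : K))) (fun u => ((L[[W]].con u : K))) := by
    funext x
    rcases x with i | u
    · exact Term.realize_constants
    · rfl
  rw [LHom.onFormula, LHom.realize_onBoundedFormula, hv]

theorem exists_withParams_equiv {W : Type u} [L.Structure W]
    (ψ : (L[[W]])[[Unit]].Sentence) :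
    ∃ (n : ℕ) (a : Fin n → W) (φ : L.Formula (Fin n ⊕ Unit)),
      ∀ (K : Type u) (strK : (L[[W]])[[Unit]].Structure K),
        (K ⊨ ψ) ↔ (K ⊨ Formula.equivSentence (withParams L φ a)) := by
  classical
  set χ : L[[W]].Formula Unit := Formula.equivSentence.symm ψ with hχ
  set θ : L.BoundedFormula (W ⊕ Unit) 0 := BoundedFormula.constantsVarsEquiv χ with hθ
  set t : Finset W := θ.freeVarFinset.preimage Sum.inl Sum.inl_injective.injOn with ht
  set n := Fintype.card ↥t with hn
  set e : ↥t ≃ Fin n := Fintype.equivFin ↥t with he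
  set a : Fin n → W := fun i => ((e.symm i : ↥t) : W) with ha
  have hsub : ↑θ.freeVarFinset ⊆ (↑θ.freeVarFinset : Set (W ⊕ Unit)) := subset_rfl
  set θ₁ : L.BoundedFormula (↑(θ.freeVarFinset : Set (W ⊕ Unit))) 0 :=
    θ.restrictFreeVar (Set.inclusion hsub) with hθ₁
  set g : (↑(θ.freeVarFinset : Set (W ⊕ Unit)) : Type u) → (Fin n ⊕ Unit) := fun x =>
    Sum.elim (fun w => if hw : w ∈ t then Sum.inl (e ⟨w, hw⟩) else Sum.inr ())
      (fun _ => Sum.inr ()) x.1 with hg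
  refine ⟨n, a, Formula.relabel g θ₁, fun K strK => ?_⟩
  letI strW : L[[W]].Structure K := ((L[[W]]).lhomWithConstants Unit).reduct K
  letI strL : L.Structure K := (L.lhomWithConstants W).reduct K
  haveI hexpW : ((L[[W]]).lhomWithConstants Unit).IsExpansionOn K :=
    LHom.isExpansionOn_reduct _ K
  haveI hexpL : (L.lhomWithConstants W).IsExpansionOn K := LHom.isExpansionOn_reduct _ K
  set vU : Unit → K := fun u => ((L[[W]].con u : K)) with hvU
  set vfull : (W ⊕ Unit) → K := Sum.elim (fun w => ((L.con w : K))) vU with hvfull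
  set w : (Fin n ⊕ Unit) → K := Sum.elim (fun i => ((L.con (a i) : K))) vU with hw
  have h1 : (K ⊨ ψ) ↔ χ.Realize vU :=
    (Formula.realize_equivSentence_symm_con K ψ).symm
  have h2 : χ.Realize vU ↔ θ.Realize vfull (default : Fin 0 → K) :=
    (BoundedFormula.realize_constantsVarsEquiv (φ := (χ : L[[W]].BoundedFormula Unit 0))
      (v := vU) (xs := default)).symm
  have h3 : θ.Realize vfull (default : Fin 0 → K) ↔
      θ₁.Realize (vfull ∘ Subtype.val) (default : Fin 0 → K) :=
    (BoundedFormula.realize_restrictFreeVar' hsub).symm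
  have h5 : w ∘ g = vfull ∘ Subtype.val := by
    funext x
    obtain ⟨x, hx⟩ := x
    rcases x with wv | u
    · have hwt : wv ∈ t := by
        rw [ht]
        exact Finset.mem_preimage.2 hx
      simp only [hg, Function.comp_apply, Sum.elim_inl, dif_pos hwt, hw, hvfull]
      simp [ha]
    · simp [hg, hw, hvfull]
  have h4 : (K ⊨ Formula.equivSentence (withParams L (Formula.relabel g θ₁) a)) ↔
      θ₁.Realize (vfull ∘ Subtype.val) (default : Fin 0 → K) := by
    rw [realize_withParamsSentence (Formula.relabel g θ₁) a]
    rw [show (Sum.elim (fun i => ((L.con (a i) : K))) (fun u => (((L[[W]]).con u : K)))) = w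
      from rfl]
    rw [Formula.realize_relabel, h5]
    rfl
  rw [h1, h2, h3, ← h4]

theorem mem_iff_realize_s11 {W : Type u} [L.Structure W] (q : typesOver L W)
    {K : Type u} [strK : (L[[W]])[[Unit]].Structure K]
    (hK : K ⊨ (q : (L[[W]])[[Unit]].Theory)) (ψ : (L[[W]])[[Unit]].Sentence) :
    ψ ∈ q ↔ K ⊨ ψ := by
  haveI := hK
  constructor
  · intro hmem
    exact Theory.realize_sentence_of_mem (q : (L[[W]])[[Unit]].Theory) hmem
  · intro hreal
    rcases q.mem_or_not_mem ψ with h | h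
    · exact h
    · exact absurd hreal
        (Theory.realize_sentence_of_mem (q : (L[[W]])[[Unit]].Theory) h)

theorem mem_congr {W : Type u} [L.Structure W] (q : typesOver L W)
    {ψ ψ' : (L[[W]])[[Unit]].Sentence}
    (hEq : ∀ (K : Type u) (strK : (L[[W]])[[Unit]].Structure K), (K ⊨ ψ) ↔ (K ⊨ ψ')) :
    ψ ∈ q ↔ ψ' ∈ q := by
  obtain ⟨K⟩ := q.isMaximal.1
  rw [mem_iff_realize_s11 q K.is_model, mem_iff_realize_s11 q K.is_model, hEq K _]

theorem sameTypeOver_comp {W : Type u} [L.Structure W] (A : Set W) (e : W ↪ₑ[L] W)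
    (he : ∀ x ∈ A, e x = x) {n : ℕ} (a : Fin n → W) :
    SameTypeOver L A a (fun i => e (a i)) := by
  intro m c hc ψ
  have key := e.map_formula ψ (Sum.elim c a)
  rw [show (⇑e ∘ Sum.elim c a) = Sum.elim c (fun i => e (a i)) from ?_] at key
  · exact key.symm
  · funext x
    rcases x with i | i
    · exact he _ (hc i)
    · rfl

theorem nonsplit_congr {W : Type u} [L.Structure W] {q : typesOver L W} {A : Set W}
    (hq : ¬ Splits L q A) {n : ℕ} {a b : Fin n → W} (hab : SameTypeOver L A a b)
    (φ : L.Formula (Fin n ⊕ Unit)) :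
    Formula.equivSentence (withParams L φ a) ∈ q ↔
      Formula.equivSentence (withParams L φ b) ∈ q := by
  have hba : SameTypeOver L A b a := fun m c hc ψ => (hab m c hc ψ).symm
  constructor
  · intro ha
    by_contra hb
    exact hq ⟨n, a, b, φ, hab, ha, by
      rw [Formula.equivSentence_not, (q.not_mem_iff _)]
      exact hb⟩
  · intro hb
    by_contra ha
    exact hq ⟨n, b, a, φ, hba, hb, by
      rw [Formula.equivSentence_not, (q.not_mem_iff _)]
      exact ha⟩

theorem realize_onSentence_withParams {W W' K : Type u} [L.Structure W] [L.Structure W']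
    [strK : (L[[W]])[[Unit]].Structure K] (g : W' → W) {n : ℕ}
    (φ : L.Formula (Fin n ⊕ Unit)) (a : Fin n → W') :
    ((K ⊨ (consMap (L := L) g).onSentence (Formula.equivSentence (withParams L φ a))) ↔
      K ⊨ Formula.equivSentence (withParams L φ (fun i => g (a i)))) := by
  letI strK' : (L[[W']])[[Unit]].Structure K := (consMap (L := L) g).reduct K
  haveI : (consMap (L := L) g).IsExpansionOn K := LHom.isExpansionOn_reduct _ K
  rw [LHom.realize_onSentence]
  rw [realize_withParamsSentence (str := strK') φ a,
    realize_withParamsSentence (str := strK) φ (fun i => g (a i))]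
  exact Iff.rfl

theorem onSentence_normal_form {W W' : Type u} [L.Structure W] [L.Structure W']
    (g : W' → W) (ψ : (L[[W']])[[Unit]].Sentence) {n : ℕ} {a : Fin n → W'}
    {φ : L.Formula (Fin n ⊕ Unit)}
    (hEq : ∀ (K : Type u) (strK : (L[[W']])[[Unit]].Structure K),
      (K ⊨ ψ) ↔ K ⊨ Formula.equivSentence (withParams L φ a)) :
    ∀ (K : Type u) (strK : (L[[W]])[[Unit]].Structure K),
      (K ⊨ (consMap (L := L) g).onSentence ψ) ↔
        K ⊨ Formula.equivSentence (withParams L φ (fun i => g (a i))) := by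
  intro K strK
  letI strK' : (L[[W']])[[Unit]].Structure K := (consMap (L := L) g).reduct K
  haveI : (consMap (L := L) g).IsExpansionOn K := LHom.isExpansionOn_reduct _ K
  rw [LHom.realize_onSentence, hEq K strK', ← LHom.realize_onSentence (M := K)
    (consMap (L := L) g) (Formula.equivSentence (withParams L φ a))]
  exact realize_onSentence_withParams g φ a

theorem realize_withConstants_of_elementary {X Y : Type u} [L.Structure X] [L.Structure Y]
    [strXY : L[[X]].Structure Y] [(lhomWithConstants L X).IsExpansionOn Y]
    (g : X ↪ₑ[L] Y) (hge : ∀ x, g x = ((L.con x : Y))) (σ : L[[X]].Sentence) :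
    Y ⊨ σ ↔ X ⊨ σ := by
  set θ : L.BoundedFormula (X ⊕ Empty) 0 :=
    BoundedFormula.constantsVarsEquiv (σ : L[[X]].BoundedFormula Empty 0) with hθ
  have hY : (Y ⊨ σ) ↔ θ.Realize (Sum.elim (fun x => ((L.con x : Y)))
      (default : Empty → Y)) (default : Fin 0 → Y) := by
    rw [hθ]
    exact (BoundedFormula.realize_constantsVarsEquiv
      (φ := (σ : L[[X]].BoundedFormula Empty 0)) (v := (default : Empty → Y))
      (xs := default)).symm
  have hX : (X ⊨ σ) ↔ θ.Realize (Sum.elim (fun x => ((L.con x : X)))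
      (default : Empty → X)) (default : Fin 0 → X) := by
    rw [hθ]
    exact (BoundedFormula.realize_constantsVarsEquiv
      (φ := (σ : L[[X]].BoundedFormula Empty 0)) (v := (default : Empty → X))
      (xs := default)).symm
  rw [hY, hX]
  have hvv : (⇑g ∘ Sum.elim (fun (x : X) => ((L.con x : X))) (default : Empty → X)) =
      Sum.elim (fun (x : X) => ((L.con x : Y))) (default : Empty → Y) := by
    funext x
    rcases x with x | e
    · have h1 : (L.con x : X) = x := rfl
      rw [Function.comp_apply, Sum.elim_inl, Sum.elim_inl, h1]
      exact hge x
    · exact e.elim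
  have key := g.map_formula (θ : L.Formula (X ⊕ Empty))
    (Sum.elim (fun x => ((L.con x : X))) (default : Empty → X))
  rw [hvv] at key
  exact key

/-- Pulled-back elementary diagram sentences belong to every complete type over `W`
when the constants are interpreted along an elementary embedding `g : W' ↪ₑ W`. -/
theorem mem_onSentence_diag {W W' : Type u} [L.Structure W] [L.Structure W']
    (g : W' ↪ₑ[L] W) (q : typesOver L W) (σ : L[[W']].Sentence)
    (hσ : σ ∈ L.elementaryDiagram W') :
    (consMap (L := L) ⇑g).onSentence (((L[[W']]).lhomWithConstants Unit).onSentence σ) ∈ q := by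
  obtain ⟨K⟩ := q.isMaximal.1
  rw [mem_iff_realize_s11 q K.is_model]
  letI strW : L[[W]].Structure K := ((L[[W]]).lhomWithConstants Unit).reduct K
  letI strL : L.Structure K := (L.lhomWithConstants W).reduct K
  haveI hexpW : ((L[[W]]).lhomWithConstants Unit).IsExpansionOn (K : Type u) :=
    LHom.isExpansionOn_reduct _ _
  haveI hexpL : (L.lhomWithConstants W).IsExpansionOn (K : Type u) :=
    LHom.isExpansionOn_reduct _ _
  haveI hdiagW : (K : Type u) ⊨ L.elementaryDiagram W := by
    rw [Theory.model_iff]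
    intro σ' hσ'
    have hmem : ((L[[W]]).lhomWithConstants Unit).onSentence σ' ∈ q :=
      q.subset (Set.mem_image_of_mem _ hσ')
    have hreal := Theory.realize_sentence_of_mem (M := (K : Type u))
      (q : (L[[W]])[[Unit]].Theory) hmem
    rwa [LHom.realize_onSentence] at hreal
  letI eK : W ↪ₑ[L] K := ElementaryEmbedding.ofModelsElementaryDiagram L W K
  letI sBig : (L[[W']])[[Unit]].Structure K := (consMap (L := L) ⇑g).reduct K
  haveI : (consMap (L := L) ⇑g).IsExpansionOn (K : Type u) := LHom.isExpansionOn_reduct _ _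
  rw [LHom.realize_onSentence]
  letI sW' : L[[W']].Structure K := ((L[[W']]).lhomWithConstants Unit).reduct K
  haveI : ((L[[W']]).lhomWithConstants Unit).IsExpansionOn (K : Type u) :=
    LHom.isExpansionOn_reduct _ _
  rw [LHom.realize_onSentence]
  haveI hexpL' : (L.lhomWithConstants W').IsExpansionOn (K : Type u) :=
    ⟨fun _ _ => rfl, fun _ _ => rfl⟩
  have := realize_withConstants_of_elementary (Y := (K : Type u))
    (eK.comp g) (fun x => rfl) σ
  rw [this]
  exact hσ

theorem isSat_pullback {W W' : Type u} [L.Structure W] [L.Structure W'] (g : W' → W)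
    (q : typesOver L W) :
    Theory.IsSatisfiable
      {ψ : (L[[W']])[[Unit]].Sentence | (consMap (L := L) g).onSentence ψ ∈ q} := by
  obtain ⟨K⟩ := q.isMaximal.1
  letI s1 : (L[[W']])[[Unit]].Structure K := (consMap (L := L) g).reduct K
  haveI : (consMap (L := L) g).IsExpansionOn (K : Type u) := LHom.isExpansionOn_reduct _ _
  haveI : (K : Type u) ⊨
      {ψ : (L[[W']])[[Unit]].Sentence | (consMap (L := L) g).onSentence ψ ∈ q} := by
    rw [Theory.model_iff]
    intro ψ hψ
    have hreal := Theory.realize_sentence_of_mem (M := (K : Type u))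
      (q : (L[[W]])[[Unit]].Theory) hψ
    rwa [LHom.realize_onSentence] at hreal
  exact ⟨⟨(K : Type u)⟩⟩

/-- Uniqueness of non-splitting extensions: let N ≼ M ≼ M' be models of T of
cardinality μ ≥ |L| with M universal over N and M' universal over M.  If p ∈ S(M)
does not split over N, then there is a unique p' ∈ S(M') extending p which does
not split over N. -/
theorem unique_nonsplitting_extension (T : L.Theory) (hT : T.IsComplete)
    (hInf : ∃ M : Theory.ModelType.{u, u, u} T, Infinite M)
    (μ : Cardinal.{u}) (hμ : ℵ₀ ≤ μ) (hL : L.card ≤ μ)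
    (Mbig : Theory.ModelType.{u, u, u} T) (hMbig : #Mbig = μ)
    (N M : L.ElementarySubstructure Mbig) (hNM : N ≤ M)
    (hN : #N = μ) (hM : #M = μ)
    (hMuniv : UniversalOver L T (↥N) (↥M) (Set.inclusion hNM) μ)
    (hMbiguniv : UniversalOver L T (↥M) Mbig ((↑) : ↥M → Mbig) μ)
    (p : typesOver L (↥M))
    (hp : ¬ Splits L p (((↑) : ↥M → Mbig) ⁻¹' (N : Set Mbig))) :
    ∃! p' : typesOver L Mbig,
      ExtendsType L M p p' ∧ ¬ Splits L p' (N : Set Mbig) := by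
  classical
  obtain ⟨f, hf⟩ := hMuniv Mbig N.subtype hMbig
  have hffix : ∀ (x : Mbig), x ∈ N → ((f x : Mbig)) = x := by
    intro x hx
    have h1 : f (N.subtype ⟨x, hx⟩) = Set.inclusion hNM ⟨x, hx⟩ := hf ⟨x, hx⟩
    have h2 : N.subtype ⟨x, hx⟩ = x := rfl
    rw [h2] at h1
    rw [h1]
  set j : Mbig ↪ₑ[L] Mbig := M.subtype.comp f with hjdef
  have hjapp : ∀ x : Mbig, j x = ((f x : Mbig)) := fun x => rfl
  have hjfix : ∀ x ∈ (N : Set Mbig), j x = x := fun x hx => hffix x hx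
  have hg0fix : ∀ x ∈ (((↑) : ↥M → Mbig) ⁻¹' (N : Set Mbig)), (f.comp M.subtype) x = x := by
    intro x hx
    apply Subtype.ext
    exact hffix (↑x) hx
  -- the extension p'
  set p' : typesOver L Mbig :=
    { toTheory := {ψ : (L[[Mbig]])[[Unit]].Sentence | (consMap (L := L) ⇑f).onSentence ψ ∈ p}
      subset' := by
        rintro ρ ⟨σ, hσ, rfl⟩
        exact mem_onSentence_diag f p σ hσ
      isMaximal' := ⟨isSat_pullback ⇑f p, fun ψ => by
        rcases p.mem_or_not_mem ((consMap (L := L) ⇑f).onSentence ψ) with h | h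
        · exact Or.inl h
        · exact Or.inr h⟩ } with hp'def
  have hmemp' : ∀ ψ : (L[[Mbig]])[[Unit]].Sentence,
      ψ ∈ p' ↔ (consMap (L := L) ⇑f).onSentence ψ ∈ p := fun ψ => Iff.rfl
  -- transfer of same-type tuples along f
  have hL3 : ∀ {n : ℕ} (a b : Fin n → Mbig), SameTypeOver L (N : Set Mbig) a b →
      SameTypeOver L (((↑) : ↥M → Mbig) ⁻¹' (N : Set Mbig))
        (fun i => f (a i)) (fun i => f (b i)) := by
    intro n a b hab m c hc ψ
    have sub : ∀ (d : Fin n → Mbig), (ψ.Realize (Sum.elim c (fun i => f (d i))) ↔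
        ψ.Realize (M := Mbig) (Sum.elim (fun i => ((c i : Mbig))) (fun i => j (d i)))) := by
      intro d
      have key := M.subtype.map_formula ψ (Sum.elim c (fun i => f (d i)))
      rw [show (⇑M.subtype ∘ Sum.elim c (fun i => f (d i))) =
          Sum.elim (fun i => ((c i : Mbig))) (fun i => j (d i)) from ?_] at key
      · exact key.symm
      · funext x
        rcases x with i | i
        · rfl
        · rfl
    have fixa := sameTypeOver_comp (N : Set Mbig) j hjfix a m
      (fun i => ((c i : Mbig))) (fun i => hc i) ψ
    have fixb := sameTypeOver_comp (N : Set Mbig) j hjfix b m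
      (fun i => ((c i : Mbig))) (fun i => hc i) ψ
    have hab' := hab m (fun i => ((c i : Mbig))) (fun i => hc i) ψ
    rw [sub a, sub b, ← fixa, ← fixb]
    exact hab'
  -- p' extends p
  have hext : ExtendsType L M p p' := by
    intro ψ hψ
    obtain ⟨n, a, φ, hEq⟩ := exists_withParams_equiv (W := ↥M) ψ
    have hEq2 := onSentence_normal_form (L := L) ((↑) : ↥M → Mbig) ψ hEq
    have hEq3 := onSentence_normal_form (L := L) ⇑f
      ((consMap (L := L) ((↑) : ↥M → Mbig)).onSentence ψ) hEq2
    have m1 : ψ ∈ p ↔ Formula.equivSentence (withParams L φ a) ∈ p := mem_congr p hEq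
    have m2 : (consMap (L := L) ⇑f).onSentence
          ((consMap (L := L) ((↑) : ↥M → Mbig)).onSentence ψ) ∈ p ↔
        Formula.equivSentence (withParams L φ (fun i => (f.comp M.subtype) (a i))) ∈ p :=
      mem_congr p (fun K s => hEq3 K s)
    have m3 : Formula.equivSentence (withParams L φ a) ∈ p ↔
        Formula.equivSentence (withParams L φ (fun i => (f.comp M.subtype) (a i))) ∈ p :=
      nonsplit_congr hp (sameTypeOver_comp _ (f.comp M.subtype) hg0fix a) φ
    exact m2.2 (m3.1 (m1.1 hψ))
  -- p' does not split over N
  have hns : ¬ Splits L p' (N : Set Mbig) := by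
    rintro ⟨n, a, b, φ, hab, h1, h2⟩
    have t1 : ∀ (d : Fin n → Mbig),
        ((consMap (L := L) ⇑f).onSentence (Formula.equivSentence (withParams L φ d)) ∈ p ↔
          Formula.equivSentence (withParams L φ (fun i => f (d i))) ∈ p) := fun d =>
      mem_congr p (fun K s => realize_onSentence_withParams ⇑f φ d)
    have ha' : Formula.equivSentence (withParams L φ (fun i => f (a i))) ∈ p :=
      (t1 a).1 ((hmemp' _).1 h1)
    have hb' : Formula.equivSentence (withParams L φ (fun i => f (b i))) ∉ p := by
      rw [Formula.equivSentence_not] at h2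
      have h2' : ((consMap (L := L) ⇑f).onSentence
          (Formula.equivSentence (withParams L φ b))).not ∈ p := (hmemp' _).1 h2
      have := (p.not_mem_iff _).1 h2'
      intro hcon
      exact this ((t1 b).2 hcon)
    exact hb' ((nonsplit_congr hp (hL3 a b hab) φ).1 ha')
  -- uniqueness
  have key : ∀ q : typesOver L Mbig, ExtendsType L M p q → ¬ Splits L q (N : Set Mbig) →
      ∀ ψ : (L[[Mbig]])[[Unit]].Sentence, ∀ {n : ℕ} (a : Fin n → Mbig)
        (φ : L.Formula (Fin n ⊕ Unit)),
        (∀ (K : Type u) (strK : (L[[Mbig]])[[Unit]].Structure K),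
          (K ⊨ ψ) ↔ K ⊨ Formula.equivSentence (withParams L φ a)) →
      (ψ ∈ q ↔ Formula.equivSentence (withParams L φ (fun i => f (a i))) ∈ p) := by
    intro q hE hS ψ n a φ hEq
    have step1 : ψ ∈ q ↔ Formula.equivSentence (withParams L φ a) ∈ q := mem_congr q hEq
    have step2 : Formula.equivSentence (withParams L φ a) ∈ q ↔
        Formula.equivSentence (withParams L φ (fun i => j (a i))) ∈ q :=
      nonsplit_congr hS (sameTypeOver_comp (N : Set Mbig) j hjfix a) φ
    have hEq4 := onSentence_normal_form (L := L) ((↑) : ↥M → Mbig)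
      (Formula.equivSentence (withParams L φ (fun i => f (a i))))
      (a := fun i => f (a i)) (φ := φ) (fun K s => Iff.rfl)
    have step3 : (consMap (L := L) ((↑) : ↥M → Mbig)).onSentence
          (Formula.equivSentence (withParams L φ (fun i => f (a i)))) ∈ q ↔
        Formula.equivSentence (withParams L φ (fun i => j (a i))) ∈ q :=
      mem_congr q (fun K s => hEq4 K s)
    have step4 : (consMap (L := L) ((↑) : ↥M → Mbig)).onSentence
          (Formula.equivSentence (withParams L φ (fun i => f (a i)))) ∈ q ↔
        Formula.equivSentence (withParams L φ (fun i => f (a i))) ∈ p := by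
      constructor
      · intro hmem
        by_contra hχ
        have hnot : (Formula.equivSentence (withParams L φ (fun i => f (a i)))).not ∈ p :=
          (p.not_mem_iff _).2 hχ
        have h5 := hE _ hnot
        have h6 : ((consMap (L := L) ((↑) : ↥M → Mbig)).onSentence
            (Formula.equivSentence (withParams L φ (fun i => f (a i))))).not ∈ q := h5
        exact (q.not_mem_iff _).1 h6 hmem
      · intro hχ
        exact hE _ hχ
    rw [step1, step2, ← step3, step4]
  have huniq : ∀ q₁ q₂ : typesOver L Mbig,
      (ExtendsType L M p q₁ ∧ ¬ Splits L q₁ (N : Set Mbig)) →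
      (ExtendsType L M p q₂ ∧ ¬ Splits L q₂ (N : Set Mbig)) → q₁ = q₂ := by
    intro q₁ q₂ ⟨hE1, hS1⟩ ⟨hE2, hS2⟩
    apply SetLike.ext
    intro ψ
    obtain ⟨n, a, φ, hEq⟩ := exists_withParams_equiv (W := Mbig) ψ
    rw [key q₁ hE1 hS1 ψ a φ hEq, key q₂ hE2 hS2 ψ a φ hEq]
  exact ⟨p', ⟨hext, hns⟩, fun q hq => huniq q p' hq ⟨hext, hns⟩⟩

end StabilityTransfer
end
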